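/- arXiv:1906.00288 — 13 statements merged into one kernel-verified Lean document; each statement's English description precedes it below -/
import Mathlib

section
/- With the definitions in the context (in particular P ≥ 1, so that T ≥ 1 and C ≥ 1), the pair-clustered variance estimator of the difference-in-means estimator satisfies V̂_pair(τ̂) = Σ_{p=1}^P (SET_p/T − SEU_p/C)². -/
open Finset

/-- In a paired experiment with `P ≥ 1` pairs, two units per pair (one treated per pair),
`n p g ≥ 1` observations in unit `g` of pair `p`, the pair-clustered variance estimator of
the difference-in-means estimator satisfies
`V̂_pair(τ̂) = Σ_p (SET_p / T - SEU_p / C)²`. -/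
theorem pair_clustered_variance_estimator_no_fe
    (P : ℕ) (hP : 1 ≤ P)
    (n : Fin P → Fin 2 → ℕ) (hn : ∀ p g, 1 ≤ n p g)
    (W : Fin P → Fin 2 → ℝ)
    (hW01 : ∀ p g, W p g = 0 ∨ W p g = 1)
    (hWpair : ∀ p, W p 0 + W p 1 = 1)
    (Y : (p : Fin P) → (g : Fin 2) → Fin (n p g) → ℝ)
    (N T C Wbar Ybar τhat : ℝ)
    (hN : N = ∑ p : Fin P, ∑ g : Fin 2, (n p g : ℝ))
    (hT : T = ∑ p : Fin P, ∑ g : Fin 2, (n p g : ℝ) * W p g)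
    (hC : C = ∑ p : Fin P, ∑ g : Fin 2, (n p g : ℝ) * (1 - W p g))
    (hWbar : Wbar = T / N)
    (hYbar : Ybar = (∑ p : Fin P, ∑ g : Fin 2, ∑ i : Fin (n p g), Y p g i) / N)
    (hτ : τhat = (∑ p : Fin P, ∑ g : Fin 2, ∑ i : Fin (n p g), W p g * Y p g i) / T
        - (∑ p : Fin P, ∑ g : Fin 2, ∑ i : Fin (n p g), (1 - W p g) * Y p g i) / C)
    (ε : (p : Fin P) → (g : Fin 2) → Fin (n p g) → ℝ)
    (hε : ∀ p g i, ε p g i = Y p g i - Ybar - τhat * (W p g - Wbar))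
    (SET SEU : Fin P → ℝ)
    (hSET : ∀ p, SET p = ∑ g : Fin 2, ∑ i : Fin (n p g), W p g * ε p g i)
    (hSEU : ∀ p, SEU p = ∑ g : Fin 2, ∑ i : Fin (n p g), (1 - W p g) * ε p g i)
    (Vpair : ℝ)
    (hVpair : Vpair = (∑ p : Fin P, (∑ g : Fin 2, ∑ i : Fin (n p g), (W p g - Wbar) * ε p g i) ^ 2)
        / (∑ p : Fin P, ∑ g : Fin 2, ∑ i : Fin (n p g), (W p g - Wbar) ^ 2) ^ 2) :
    Vpair = ∑ p : Fin P, (SET p / T - SEU p / C) ^ 2 := by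

  have hne : (Finset.univ : Finset (Fin P)).Nonempty := ⟨⟨0, hP⟩, Finset.mem_univ _⟩
  have hTpos : 0 < T := by
    rw [hT]
    apply Finset.sum_pos _ hne
    intro p _
    rw [Fin.sum_univ_two]
    have hp := hWpair p
    have hn0 : (1:ℝ) ≤ (n p 0 : ℝ) := by exact_mod_cast hn p 0
    have hn1 : (1:ℝ) ≤ (n p 1 : ℝ) := by exact_mod_cast hn p 1
    rcases hW01 p 0 with h|h <;> rcases hW01 p 1 with h'|h' <;>
      rw [h, h'] at hp ⊢ <;> nlinarith
  have hCpos : 0 < C := by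
    rw [hC]
    apply Finset.sum_pos _ hne
    intro p _
    rw [Fin.sum_univ_two]
    have hp := hWpair p
    have hn0 : (1:ℝ) ≤ (n p 0 : ℝ) := by exact_mod_cast hn p 0
    have hn1 : (1:ℝ) ≤ (n p 1 : ℝ) := by exact_mod_cast hn p 1
    rcases hW01 p 0 with h|h <;> rcases hW01 p 1 with h'|h' <;>
      rw [h, h'] at hp ⊢ <;> nlinarith
  have hNeq : N = T + C := by
    rw [hN, hT, hC, ← Finset.sum_add_distrib]
    refine Finset.sum_congr rfl fun p _ => ?_
    rw [← Finset.sum_add_distrib]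
    exact Finset.sum_congr rfl fun g _ => by ring
  have hNpos : 0 < N := by linarith
  have hT0 : T ≠ 0 := ne_of_gt hTpos
  have hC0 : C ≠ 0 := ne_of_gt hCpos
  have hN0 : N ≠ 0 := ne_of_gt hNpos
  have hD : (∑ p : Fin P, ∑ g : Fin 2, ∑ i : Fin (n p g), (W p g - Wbar) ^ 2) = T * C / N := by
    have step : ∀ p g, (∑ i : Fin (n p g), (W p g - Wbar) ^ 2)
        = (n p g : ℝ) * W p g - 2 * Wbar * ((n p g : ℝ) * W p g) + Wbar ^ 2 * (n p g : ℝ) := by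
      intro p g
      rw [Finset.sum_const, Finset.card_univ, Fintype.card_fin, nsmul_eq_mul]
      rcases hW01 p g with h|h <;> rw [h] <;> ring
    simp only [step]
    have h1 : (∑ p : Fin P, ∑ g : Fin 2,
        ((n p g : ℝ) * W p g - 2 * Wbar * ((n p g : ℝ) * W p g) + Wbar ^ 2 * (n p g : ℝ)))
        = (∑ p : Fin P, ∑ g : Fin 2, (n p g : ℝ) * W p g)
          - 2 * Wbar * (∑ p : Fin P, ∑ g : Fin 2, (n p g : ℝ) * W p g)
          + Wbar ^ 2 * (∑ p : Fin P, ∑ g : Fin 2, (n p g : ℝ)) := by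
      simp only [Finset.sum_add_distrib, Finset.sum_sub_distrib, ← Finset.mul_sum]
    rw [h1, ← hT, ← hN, hWbar]
    have hC' : C = N - T := by linarith
    rw [hC']
    field_simp
    ring
  have hnum : ∀ p, (∑ g : Fin 2, ∑ i : Fin (n p g), (W p g - Wbar) * ε p g i)
      = (1 - Wbar) * SET p - Wbar * SEU p := by
    intro p
    rw [hSET p, hSEU p, Finset.mul_sum, Finset.mul_sum, ← Finset.sum_sub_distrib]
    refine Finset.sum_congr rfl fun g _ => ?_
    rw [Finset.mul_sum, Finset.mul_sum, ← Finset.sum_sub_distrib]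
    exact Finset.sum_congr rfl fun i _ => by ring
  have hWbar' : 1 - Wbar = C / N := by
    rw [hWbar]
    field_simp
    linarith
  rw [hVpair, hD, Finset.sum_div]
  refine Finset.sum_congr rfl fun p _ => ?_
  rw [hnum p, hWbar', hWbar]
  field_simp
end

section
/- With the definitions in the context (in particular P ≥ 1, so that T ≥ 1 and C ≥ 1), the unit-clustered variance estimator of the difference-in-means estimator satisfies V̂_unit(τ̂) = Σ_{p=1}^P (SET_p²/T² + SEU_p²/C²). -/
open Finset

/-- In a paired experiment with `P ≥ 1` pairs, two units per pair (one treated per pair),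
`n p g ≥ 1` observations in unit `g` of pair `p`, the unit-clustered variance estimator of
the difference-in-means estimator satisfies
`V̂_unit(τ̂) = Σ_p (SET_p² / T² + SEU_p² / C²)`. -/
theorem unit_clustered_variance_estimator_no_fe
    (P : ℕ) (hP : 1 ≤ P)
    (n : Fin P → Fin 2 → ℕ) (hn : ∀ p g, 1 ≤ n p g)
    (W : Fin P → Fin 2 → ℝ)
    (hW01 : ∀ p g, W p g = 0 ∨ W p g = 1)
    (hWpair : ∀ p, W p 0 + W p 1 = 1)
    (Y : (p : Fin P) → (g : Fin 2) → Fin (n p g) → ℝ)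
    (N T C Wbar Ybar τhat : ℝ)
    (hN : N = ∑ p : Fin P, ∑ g : Fin 2, (n p g : ℝ))
    (hT : T = ∑ p : Fin P, ∑ g : Fin 2, (n p g : ℝ) * W p g)
    (hC : C = ∑ p : Fin P, ∑ g : Fin 2, (n p g : ℝ) * (1 - W p g))
    (hWbar : Wbar = T / N)
    (hYbar : Ybar = (∑ p : Fin P, ∑ g : Fin 2, ∑ i : Fin (n p g), Y p g i) / N)
    (hτ : τhat = (∑ p : Fin P, ∑ g : Fin 2, ∑ i : Fin (n p g), W p g * Y p g i) / T
        - (∑ p : Fin P, ∑ g : Fin 2, ∑ i : Fin (n p g), (1 - W p g) * Y p g i) / C)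
    (ε : (p : Fin P) → (g : Fin 2) → Fin (n p g) → ℝ)
    (hε : ∀ p g i, ε p g i = Y p g i - Ybar - τhat * (W p g - Wbar))
    (SET SEU : Fin P → ℝ)
    (hSET : ∀ p, SET p = ∑ g : Fin 2, ∑ i : Fin (n p g), W p g * ε p g i)
    (hSEU : ∀ p, SEU p = ∑ g : Fin 2, ∑ i : Fin (n p g), (1 - W p g) * ε p g i)
    (Vunit : ℝ)
    (hVunit : Vunit = (∑ p : Fin P, ∑ g : Fin 2, ((W p g - Wbar) * ∑ i : Fin (n p g), ε p g i) ^ 2)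
        / (∑ p : Fin P, ∑ g : Fin 2, ∑ i : Fin (n p g), (W p g - Wbar) ^ 2) ^ 2) :
    Vunit = ∑ p : Fin P, (SET p ^ 2 / T ^ 2 + SEU p ^ 2 / C ^ 2) := by
  have hcases : ∀ p : Fin P, (W p 0 = 1 ∧ W p 1 = 0) ∨ (W p 0 = 0 ∧ W p 1 = 1) := by
    intro p
    have h := hWpair p
    rcases hW01 p 0 with h0 | h0 <;> rcases hW01 p 1 with h1 | h1 <;>
      rw [h0, h1] at h <;> norm_num at h <;> tauto
  have hnum : (∑ p : Fin P, ∑ g : Fin 2, ((W p g - Wbar) * ∑ i : Fin (n p g), ε p g i) ^ 2)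
      = (1 - Wbar) ^ 2 * (∑ p : Fin P, SET p ^ 2) + Wbar ^ 2 * (∑ p : Fin P, SEU p ^ 2) := by
    rw [Finset.mul_sum, Finset.mul_sum, ← Finset.sum_add_distrib]
    refine Finset.sum_congr rfl fun p _ => ?_
    rcases hcases p with ⟨h0, h1⟩ | ⟨h0, h1⟩ <;>
      simp only [hSET, hSEU, Fin.sum_univ_two, ← Finset.mul_sum, h0, h1] <;> ring
  have hden : (∑ p : Fin P, ∑ g : Fin 2, ∑ i : Fin (n p g), (W p g - Wbar) ^ 2)
      = (1 - Wbar) ^ 2 * T + Wbar ^ 2 * C := by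
    rw [hT, hC, Finset.mul_sum, Finset.mul_sum, ← Finset.sum_add_distrib]
    refine Finset.sum_congr rfl fun p _ => ?_
    rcases hcases p with ⟨h0, h1⟩ | ⟨h0, h1⟩ <;>
      simp only [Fin.sum_univ_two, Finset.sum_const, Finset.card_univ, Fintype.card_fin,
        nsmul_eq_mul, h0, h1] <;> ring
  have hpair1 : ∀ p : Fin P, (1 : ℝ) ≤ ∑ g : Fin 2, (n p g : ℝ) * W p g := by
    intro p
    rcases hcases p with ⟨h0, h1⟩ | ⟨h0, h1⟩ <;>
      simp only [Fin.sum_univ_two, h0, h1, mul_one, mul_zero, add_zero, zero_add] <;>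
      exact_mod_cast hn p _
  have hpair2 : ∀ p : Fin P, (1 : ℝ) ≤ ∑ g : Fin 2, (n p g : ℝ) * (1 - W p g) := by
    intro p
    rcases hcases p with ⟨h0, h1⟩ | ⟨h0, h1⟩ <;>
      simp only [Fin.sum_univ_two, h0, h1] <;> norm_num <;> exact_mod_cast hn p _
  have hT1 : (1 : ℝ) ≤ T := by
    rw [hT]
    calc (1 : ℝ) ≤ (P : ℝ) := by exact_mod_cast hP
      _ = ∑ _p : Fin P, (1 : ℝ) := by simp
      _ ≤ _ := Finset.sum_le_sum fun p _ => hpair1 p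
  have hC1 : (1 : ℝ) ≤ C := by
    rw [hC]
    calc (1 : ℝ) ≤ (P : ℝ) := by exact_mod_cast hP
      _ = ∑ _p : Fin P, (1 : ℝ) := by simp
      _ ≤ _ := Finset.sum_le_sum fun p _ => hpair2 p
  have hT0 : T ≠ 0 := by linarith
  have hC0 : C ≠ 0 := by linarith
  have hN' : N = T + C := by
    rw [hN, hT, hC, ← Finset.sum_add_distrib]
    refine Finset.sum_congr rfl fun p _ => ?_
    rw [← Finset.sum_add_distrib]
    exact Finset.sum_congr rfl fun g _ => by ring
  have hN0 : T + C ≠ 0 := by linarith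
  have hW1 : 1 - Wbar = C / N := by
    rw [hWbar, hN']
    field_simp
    ring
  rw [hVunit, hnum, hden, hW1, hWbar, hN',
    Finset.sum_add_distrib, ← Finset.sum_div, ← Finset.sum_div]
  field_simp
  ring
end

section
/- With the definitions in the context, the pair-clustered variance estimator of the fixed-effects estimator satisfies V̂_pair(τ̂_fe) = Σ_{p=1}^P ω_p² SET_{p,fe}² (1/n_{1p} + 1/n_{2p})². -/
open Finset

set_option maxHeartbeats 1000000

/-- In a paired experiment, the pair-clustered variance estimator of the pair-fixed-effects
estimator satisfies `V̂_pair(τ̂_fe) = Σ_p ω_p² SET_{p,fe}² (1/n_{1p} + 1/n_{2p})²`. -/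
theorem pair_clustered_variance_estimator_fe
    (P : ℕ) (hP : 1 ≤ P)
    (n : Fin P → Fin 2 → ℕ) (hn : ∀ p g, 1 ≤ n p g)
    (W : Fin P → Fin 2 → ℝ)
    (hW01 : ∀ p g, W p g = 0 ∨ W p g = 1)
    (hWpair : ∀ p, W p 0 + W p 1 = 1)
    (Y : (p : Fin P) → (g : Fin 2) → Fin (n p g) → ℝ)
    (w : Fin P → ℝ)
    (hw : ∀ p, w p = (1 / (n p 0 : ℝ) + 1 / (n p 1 : ℝ))⁻¹
        / ∑ p' : Fin P, (1 / (n p' 0 : ℝ) + 1 / (n p' 1 : ℝ))⁻¹)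
    (τfe : ℝ)
    (hτfe : τfe = ∑ p : Fin P, w p * ∑ g : Fin 2,
        (2 * W p g - 1) * (∑ i : Fin (n p g), Y p g i) / (n p g : ℝ))
    (Tp np Wbarp Ybarp : Fin P → ℝ)
    (hTp : ∀ p, Tp p = ∑ g : Fin 2, (n p g : ℝ) * W p g)
    (hnp : ∀ p, np p = (n p 0 : ℝ) + (n p 1 : ℝ))
    (hWbarp : ∀ p, Wbarp p = Tp p / np p)
    (hYbarp : ∀ p, Ybarp p = (∑ g : Fin 2, ∑ i : Fin (n p g), Y p g i) / np p)
    (u : (p : Fin P) → (g : Fin 2) → Fin (n p g) → ℝ)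
    (hu : ∀ p g i, u p g i = Y p g i - Ybarp p - τfe * (W p g - Wbarp p))
    (SETfe : Fin P → ℝ)
    (hSETfe : ∀ p, SETfe p = ∑ g : Fin 2, ∑ i : Fin (n p g), W p g * u p g i)
    (Vpairfe : ℝ)
    (hVpairfe : Vpairfe
        = (∑ p : Fin P, (∑ g : Fin 2, ∑ i : Fin (n p g), (W p g - Wbarp p) * u p g i) ^ 2)
        / (∑ p : Fin P, ∑ g : Fin 2, ∑ i : Fin (n p g), (W p g - Wbarp p) ^ 2) ^ 2) :
    Vpairfe = ∑ p : Fin P,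
      (w p) ^ 2 * (SETfe p) ^ 2 * (1 / (n p 0 : ℝ) + 1 / (n p 1 : ℝ)) ^ 2 := by

  have hn0 : ∀ p g, (0:ℝ) < (n p g : ℝ) := fun p g => by exact_mod_cast hn p g
  have hnpne : ∀ p, (n p 0 : ℝ) + (n p 1 : ℝ) ≠ 0 := fun p => by
    have := hn0 p 0; have := hn0 p 1; linarith
  have hHpos : ∀ p, (0:ℝ) < (1 / (n p 0 : ℝ) + 1 / (n p 1 : ℝ))⁻¹ := fun p => by
    have h0 := hn0 p 0; have h1 := hn0 p 1; positivity
  have hSpos : (0:ℝ) < ∑ p' : Fin P, (1 / (n p' 0 : ℝ) + 1 / (n p' 1 : ℝ))⁻¹ := by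
    have : Nonempty (Fin P) := ⟨⟨0, hP⟩⟩
    exact Finset.sum_pos (fun p _ => hHpos p) Finset.univ_nonempty
  -- denominator per pair
  have hA : ∀ p, (∑ g : Fin 2, ∑ i : Fin (n p g), (W p g - Wbarp p) ^ 2)
      = (1 / (n p 0 : ℝ) + 1 / (n p 1 : ℝ))⁻¹ := by
    intro p
    have h0 := hn0 p 0; have h1 := hn0 p 1
    have hW1 : W p 1 = 1 - W p 0 := by have := hWpair p; linarith
    rw [Fin.sum_univ_two]
    simp only [Finset.sum_const, Finset.card_univ, Fintype.card_fin, nsmul_eq_mul]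
    rw [hWbarp, hTp, hnp, Fin.sum_univ_two, hW1]
    rcases hW01 p 0 with h | h <;> rw [h] <;> field_simp <;> ring
  -- sum of residuals in each pair is zero
  have hsumu : ∀ p, (∑ g : Fin 2, ∑ i : Fin (n p g), u p g i) = 0 := by
    intro p
    have h0 := hn0 p 0; have h1 := hn0 p 1
    simp only [hu]
    rw [Fin.sum_univ_two]
    simp only [Finset.sum_sub_distrib, Finset.sum_const, Finset.card_univ,
      Fintype.card_fin, nsmul_eq_mul]
    rw [hYbarp, hWbarp, hTp, hnp, Fin.sum_univ_two, Fin.sum_univ_two]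
    field_simp
    ring
  -- numerator per pair
  have hB : ∀ p, (∑ g : Fin 2, ∑ i : Fin (n p g), (W p g - Wbarp p) * u p g i)
      = SETfe p := by
    intro p
    have : (∑ g : Fin 2, ∑ i : Fin (n p g), (W p g - Wbarp p) * u p g i)
        = (∑ g : Fin 2, ∑ i : Fin (n p g), W p g * u p g i)
          - Wbarp p * (∑ g : Fin 2, ∑ i : Fin (n p g), u p g i) := by
      rw [Finset.mul_sum, ← Finset.sum_sub_distrib]
      refine Finset.sum_congr rfl fun g _ => ?_
      rw [Finset.mul_sum, ← Finset.sum_sub_distrib]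
      refine Finset.sum_congr rfl fun i _ => ?_
      ring
    rw [this, hsumu p, hSETfe p]
    ring
  rw [hVpairfe]
  rw [Finset.sum_congr rfl fun p _ => congrArg (· ^ 2) (hB p),
      Finset.sum_congr rfl fun p _ => hA p]
  rw [Finset.sum_div]
  refine Finset.sum_congr rfl fun p _ => ?_
  set S := ∑ p' : Fin P, (1 / (n p' 0 : ℝ) + 1 / (n p' 1 : ℝ))⁻¹ with hS
  rw [hw p]
  have h0 := hn0 p 0; have h1 := hn0 p 1
  have hne : (1 / (n p 0 : ℝ) + 1 / (n p 1 : ℝ)) ≠ 0 := by positivity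
  rw [show ((1 / (n p 0 : ℝ) + 1 / (n p 1 : ℝ))⁻¹ / S) ^ 2 * SETfe p ^ 2
        * (1 / (n p 0 : ℝ) + 1 / (n p 1 : ℝ)) ^ 2
      = ((1 / (n p 0 : ℝ) + 1 / (n p 1 : ℝ))⁻¹ * (1 / (n p 0 : ℝ) + 1 / (n p 1 : ℝ))) ^ 2
        * SETfe p ^ 2 / S ^ 2 from by ring,
    inv_mul_cancel₀ hne]
  ring
end

section
/- With the definitions in the context, the unit-clustered variance estimator of the fixed-effects estimator satisfies V̂_unit(τ̂_fe) = Σ_{p=1}^P ω_p² SET_{p,fe}² (1/n_{1p}² + 1/n_{2p}²). -/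
open Finset


lemma harm_aux (a b : ℝ) (ha : a ≠ 0) (hb : b ≠ 0) :
    (1 / a + 1 / b)⁻¹ = a * b / (a + b) := by
  rw [div_add_div _ _ ha hb, one_mul, mul_one, inv_div, add_comm b a]

lemma den_aux (a b W0 W1 : ℝ) (ha : a ≠ 0) (hb : b ≠ 0) (hab : a + b ≠ 0)
    (hpair : W0 + W1 = 1) (h01 : W0 = 0 ∨ W0 = 1) :
    a * (W0 - (a * W0 + b * W1) / (a + b)) ^ 2
      + b * (W1 - (a * W0 + b * W1) / (a + b)) ^ 2
      = (1 / a + 1 / b)⁻¹ := by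
  rw [harm_aux a b ha hb]
  have hW1 : W1 = 1 - W0 := by linarith
  subst hW1
  rcases h01 with h | h <;> subst h <;> field_simp <;> ring

lemma num_aux (a b W0 W1 S0 S1 : ℝ) (ha : a ≠ 0) (hb : b ≠ 0) (hab : a + b ≠ 0)
    (hpair : W0 + W1 = 1) (h01 : W0 = 0 ∨ W0 = 1) (hS : S0 + S1 = 0) :
    ((W0 - (a * W0 + b * W1) / (a + b)) * S0) ^ 2
      + ((W1 - (a * W0 + b * W1) / (a + b)) * S1) ^ 2
      = ((1 / a + 1 / b)⁻¹) ^ 2 * (W0 * S0 + W1 * S1) ^ 2 * (1 / a ^ 2 + 1 / b ^ 2) := by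
  rw [harm_aux a b ha hb]
  have hW1 : W1 = 1 - W0 := by linarith
  have hS1 : S1 = -S0 := by linarith
  subst hW1; subst hS1
  rcases h01 with h | h <;> subst h <;> field_simp <;> ring

/-- In a paired experiment, the unit-clustered variance estimator of the pair-fixed-effects
estimator satisfies `V̂_unit(τ̂_fe) = Σ_p ω_p² SET_{p,fe}² (1/n_{1p}² + 1/n_{2p}²)`. -/
theorem unit_clustered_variance_estimator_fe
    (P : ℕ) (hP : 1 ≤ P)
    (n : Fin P → Fin 2 → ℕ) (hn : ∀ p g, 1 ≤ n p g)
    (W : Fin P → Fin 2 → ℝ)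
    (hW01 : ∀ p g, W p g = 0 ∨ W p g = 1)
    (hWpair : ∀ p, W p 0 + W p 1 = 1)
    (Y : (p : Fin P) → (g : Fin 2) → Fin (n p g) → ℝ)
    (w : Fin P → ℝ)
    (hw : ∀ p, w p = (1 / (n p 0 : ℝ) + 1 / (n p 1 : ℝ))⁻¹
        / ∑ p' : Fin P, (1 / (n p' 0 : ℝ) + 1 / (n p' 1 : ℝ))⁻¹)
    (τfe : ℝ)
    (hτfe : τfe = ∑ p : Fin P, w p * ∑ g : Fin 2,
        (2 * W p g - 1) * (∑ i : Fin (n p g), Y p g i) / (n p g : ℝ))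
    (Tp np Wbarp Ybarp : Fin P → ℝ)
    (hTp : ∀ p, Tp p = ∑ g : Fin 2, (n p g : ℝ) * W p g)
    (hnp : ∀ p, np p = (n p 0 : ℝ) + (n p 1 : ℝ))
    (hWbarp : ∀ p, Wbarp p = Tp p / np p)
    (hYbarp : ∀ p, Ybarp p = (∑ g : Fin 2, ∑ i : Fin (n p g), Y p g i) / np p)
    (u : (p : Fin P) → (g : Fin 2) → Fin (n p g) → ℝ)
    (hu : ∀ p g i, u p g i = Y p g i - Ybarp p - τfe * (W p g - Wbarp p))
    (SETfe : Fin P → ℝ)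
    (hSETfe : ∀ p, SETfe p = ∑ g : Fin 2, ∑ i : Fin (n p g), W p g * u p g i)
    (Vunitfe : ℝ)
    (hVunitfe : Vunitfe
        = (∑ p : Fin P, ∑ g : Fin 2, ((W p g - Wbarp p) * ∑ i : Fin (n p g), u p g i) ^ 2)
        / (∑ p : Fin P, ∑ g : Fin 2, ∑ i : Fin (n p g), (W p g - Wbarp p) ^ 2) ^ 2) :
    Vunitfe = ∑ p : Fin P,
      (w p) ^ 2 * (SETfe p) ^ 2 * (1 / (n p 0 : ℝ) ^ 2 + 1 / (n p 1 : ℝ) ^ 2) := by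
  have hc : ∀ p g, ((n p g : ℝ)) ≠ 0 := fun p g =>
    Nat.cast_ne_zero.mpr (Nat.one_le_iff_ne_zero.mp (hn p g))
  have hab : ∀ p, ((n p 0 : ℝ) + (n p 1 : ℝ)) ≠ 0 := by
    intro p
    have h0 : (0:ℝ) < (n p 0 : ℝ) := Nat.cast_pos.mpr (hn p 0)
    have h1 : (0:ℝ) < (n p 1 : ℝ) := Nat.cast_pos.mpr (hn p 1)
    positivity
  -- sum of residuals within a unit
  have hS : ∀ p g, (∑ i : Fin (n p g), u p g i)
      = (∑ i : Fin (n p g), Y p g i) - (n p g : ℝ) * Ybarp p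
        - (n p g : ℝ) * (τfe * (W p g - Wbarp p)) := by
    intro p g
    simp only [hu, Finset.sum_sub_distrib, Finset.sum_const, card_univ, Fintype.card_fin,
      nsmul_eq_mul]
  -- residual sums within a pair cancel
  have hSsum : ∀ p, (∑ i : Fin (n p 0), u p 0 i) + (∑ i : Fin (n p 1), u p 1 i) = 0 := by
    intro p
    have h0 := hc p 0
    have h1 := hc p 1
    have h2 := hab p
    rw [hS, hS, hYbarp, hWbarp, hTp, hnp, Fin.sum_univ_two, Fin.sum_univ_two]
    field_simp
    ring
  have hSET : ∀ p, SETfe p = W p 0 * (∑ i : Fin (n p 0), u p 0 i)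
      + W p 1 * (∑ i : Fin (n p 1), u p 1 i) := by
    intro p
    rw [hSETfe, Fin.sum_univ_two, ← Finset.mul_sum, ← Finset.mul_sum]
  -- denominator per pair
  have hden : ∀ p, (∑ g : Fin 2, ∑ i : Fin (n p g), (W p g - Wbarp p) ^ 2)
      = (1 / (n p 0 : ℝ) + 1 / (n p 1 : ℝ))⁻¹ := by
    intro p
    rw [Fin.sum_univ_two]
    simp only [Finset.sum_const, card_univ, Fintype.card_fin, nsmul_eq_mul]
    rw [hWbarp, hTp, hnp, Fin.sum_univ_two]
    exact den_aux _ _ _ _ (hc p 0) (hc p 1) (hab p) (hWpair p) (hW01 p 0)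
  -- numerator per pair
  have hnum : ∀ p, (∑ g : Fin 2, ((W p g - Wbarp p) * ∑ i : Fin (n p g), u p g i) ^ 2)
      = ((1 / (n p 0 : ℝ) + 1 / (n p 1 : ℝ))⁻¹) ^ 2 * (SETfe p) ^ 2
        * (1 / (n p 0 : ℝ) ^ 2 + 1 / (n p 1 : ℝ) ^ 2) := by
    intro p
    rw [Fin.sum_univ_two, hSET p, hWbarp, hTp, hnp, Fin.sum_univ_two]
    exact num_aux _ _ _ _ _ _ (hc p 0) (hc p 1) (hab p) (hWpair p) (hW01 p 0) (hSsum p)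
  rw [hVunitfe, Finset.sum_congr rfl fun p _ => hnum p,
    Finset.sum_congr rfl fun p _ => hden p, Finset.sum_div]
  refine Finset.sum_congr rfl fun p _ => ?_
  rw [hw]
  ring
end

section
/- If n_{1p} = n_{2p} for every pair p (the two randomization units in each pair have the same number of observations), then the difference-in-means estimator equals the pair-fixed-effects estimator: τ̂ = τ̂_fe. -/
open Finset

/-- If the two randomization units in each pair have the same number of observations
(`n_{1p} = n_{2p}` for every `p`), then the difference-in-means estimator equals the
pair-fixed-effects estimator: `τ̂ = τ̂_fe`. -/
theorem diff_in_means_eq_fixed_effects_estimator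
    (P : ℕ) (hP : 1 ≤ P)
    (n : Fin P → Fin 2 → ℕ) (hn : ∀ p g, 1 ≤ n p g)
    (hbal : ∀ p, n p 0 = n p 1)
    (W : Fin P → Fin 2 → ℝ)
    (hW01 : ∀ p g, W p g = 0 ∨ W p g = 1)
    (hWpair : ∀ p, W p 0 + W p 1 = 1)
    (Y : (p : Fin P) → (g : Fin 2) → Fin (n p g) → ℝ)
    (T C τhat : ℝ)
    (hT : T = ∑ p : Fin P, ∑ g : Fin 2, (n p g : ℝ) * W p g)
    (hC : C = ∑ p : Fin P, ∑ g : Fin 2, (n p g : ℝ) * (1 - W p g))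
    (hτ : τhat = (∑ p : Fin P, ∑ g : Fin 2, ∑ i : Fin (n p g), W p g * Y p g i) / T
        - (∑ p : Fin P, ∑ g : Fin 2, ∑ i : Fin (n p g), (1 - W p g) * Y p g i) / C)
    (w : Fin P → ℝ)
    (hw : ∀ p, w p = (1 / (n p 0 : ℝ) + 1 / (n p 1 : ℝ))⁻¹
        / ∑ p' : Fin P, (1 / (n p' 0 : ℝ) + 1 / (n p' 1 : ℝ))⁻¹)
    (τfe : ℝ)
    (hτfe : τfe = ∑ p : Fin P, w p * ∑ g : Fin 2,
        (2 * W p g - 1) * (∑ i : Fin (n p g), Y p g i) / (n p g : ℝ)) :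
    τhat = τfe := by
  have hne : ∀ p : Fin P, (n p 0 : ℝ) ≠ 0 := fun p =>
    Nat.cast_ne_zero.mpr (Nat.one_le_iff_ne_zero.mp (hn p 0))
  have hNe : Nonempty (Fin P) := ⟨⟨0, hP⟩⟩
  set S : ℝ := ∑ p : Fin P, (n p 0 : ℝ) with hS
  have hSpos : 0 < S :=
    Finset.sum_pos (fun p _ => by exact_mod_cast hn p 0) Finset.univ_nonempty
  have hSne : S ≠ 0 := ne_of_gt hSpos
  have hTS : T = S := by
    rw [hT]; refine Finset.sum_congr rfl fun p _ => ?_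
    rw [Fin.sum_univ_two, ← hbal p]
    linear_combination (n p 0 : ℝ) * (hWpair p)
  have hCS : C = S := by
    rw [hC]; refine Finset.sum_congr rfl fun p _ => ?_
    rw [Fin.sum_univ_two, ← hbal p]
    linear_combination (- (n p 0 : ℝ)) * (hWpair p)
  have hwp : ∀ p, w p = (n p 0 : ℝ) / S := by
    intro p
    rw [hw p, ← hbal p]
    have hden : (∑ p' : Fin P, (1 / (n p' 0 : ℝ) + 1 / (n p' 1 : ℝ))⁻¹) = S / 2 := by
      rw [hS, Finset.sum_div]
      refine Finset.sum_congr rfl fun p' _ => ?_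
      rw [← hbal p', show (1 / (n p' 0 : ℝ) + 1 / (n p' 0 : ℝ)) = 2 / (n p' 0 : ℝ) from by ring,
        inv_div]
    rw [hden, show (1 / (n p 0 : ℝ) + 1 / (n p 0 : ℝ)) = 2 / (n p 0 : ℝ) from by ring, inv_div]
    rw [div_div_div_eq]
    rw [mul_comm (n p 0 : ℝ) 2, mul_div_mul_left _ _ (two_ne_zero)]
  set f : Fin P → ℝ := fun p =>
    (2 * W p 0 - 1) * (∑ i : Fin (n p 0), Y p 0 i)
      + (2 * W p 1 - 1) * (∑ i : Fin (n p 1), Y p 1 i) with hf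
  have h1 : τhat = (∑ p : Fin P, f p) / S := by
    rw [hτ, hTS, hCS, div_sub_div_same]
    congr 1
    rw [← Finset.sum_sub_distrib]
    refine Finset.sum_congr rfl fun p _ => ?_
    rw [hf]
    simp only [Fin.sum_univ_two, ← Finset.mul_sum]
    ring
  have h2 : τfe = (∑ p : Fin P, f p) / S := by
    rw [hτfe, Finset.sum_div]
    refine Finset.sum_congr rfl fun p _ => ?_
    rw [hwp p, hf, Fin.sum_univ_two]
    have hb := hbal p
    rw [show ((n p 1 : ℝ)) = (n p 0 : ℝ) by exact_mod_cast hb.symm]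
    field_simp [hne p, hSne]
  rw [h1, h2]
end

section
/- Under the balanced-design assumption n_{1p} = n_{2p} = n/(2P) for all p, the pair-clustered variance estimator of the difference-in-means estimator equals the empirical variance of the within-pair estimators: V̂_pair(τ̂) = (1/P²)Σ_{p=1}^P (τ̂_p − τ̂)². -/
open Finset

lemma sum_aff' {k : ℕ} (f : Fin k → ℝ) (a b : ℝ) :
    ∑ i, (a * f i + b) = a * (∑ i, f i) + k * b := by
  simp [Finset.sum_add_distrib, ← Finset.mul_sum, Finset.sum_const, nsmul_eq_mul,
    Finset.card_univ]

/-- Under the balanced-design assumption `n_{1p} = n_{2p} = n/(2P)` for all `p`, the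
pair-clustered variance estimator of the difference-in-means estimator equals the empirical
variance of the within-pair estimators: `V̂_pair(τ̂) = (1/P²) Σ_p (τ̂_p − τ̂)²`. -/
theorem pair_clustered_variance_eq_empirical_variance
    (P : ℕ) (hP : 1 ≤ P)
    (n : Fin P → Fin 2 → ℕ) (hn : ∀ p g, 1 ≤ n p g)
    (hbal : ∀ p g, n p g * (2 * P) = ∑ p' : Fin P, ∑ g' : Fin 2, n p' g')
    (W : Fin P → Fin 2 → ℝ)
    (hW01 : ∀ p g, W p g = 0 ∨ W p g = 1)
    (hWpair : ∀ p, W p 0 + W p 1 = 1)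
    (Y : (p : Fin P) → (g : Fin 2) → Fin (n p g) → ℝ)
    (N T C Wbar Ybar τhat : ℝ)
    (hN : N = ∑ p : Fin P, ∑ g : Fin 2, (n p g : ℝ))
    (hT : T = ∑ p : Fin P, ∑ g : Fin 2, (n p g : ℝ) * W p g)
    (hC : C = ∑ p : Fin P, ∑ g : Fin 2, (n p g : ℝ) * (1 - W p g))
    (hWbar : Wbar = T / N)
    (hYbar : Ybar = (∑ p : Fin P, ∑ g : Fin 2, ∑ i : Fin (n p g), Y p g i) / N)
    (hτ : τhat = (∑ p : Fin P, ∑ g : Fin 2, ∑ i : Fin (n p g), W p g * Y p g i) / T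
        - (∑ p : Fin P, ∑ g : Fin 2, ∑ i : Fin (n p g), (1 - W p g) * Y p g i) / C)
    (ε : (p : Fin P) → (g : Fin 2) → Fin (n p g) → ℝ)
    (hε : ∀ p g i, ε p g i = Y p g i - Ybar - τhat * (W p g - Wbar))
    (Vpair : ℝ)
    (hVpair : Vpair = (∑ p : Fin P,
        (∑ g : Fin 2, ∑ i : Fin (n p g), (W p g - Wbar) * ε p g i) ^ 2)
        / (∑ p : Fin P, ∑ g : Fin 2, ∑ i : Fin (n p g), (W p g - Wbar) ^ 2) ^ 2)
    (np τp : Fin P → ℝ)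
    (hnp : ∀ p, np p = (n p 0 : ℝ) + (n p 1 : ℝ))
    (hτp : ∀ p, τp p = (2 / np p) * ∑ g : Fin 2,
        (2 * W p g - 1) * ∑ i : Fin (n p g), Y p g i) :
    Vpair = (∑ p : Fin P, (τp p - τhat) ^ 2) / P ^ 2 := by
  have hP0 : 0 < P := hP
  set p0 : Fin P := ⟨0, hP0⟩
  set m : ℕ := n p0 0 with hm
  have hmm : ∀ p g, n p g = m := by
    intro p g
    have h1 := (hbal p g).trans (hbal p0 0).symm
    exact Nat.eq_of_mul_eq_mul_right (by omega) h1
  have hm1 : 1 ≤ m := hn p0 0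
  have hmr : (m : ℝ) ≠ 0 := by positivity
  have hPr : (P : ℝ) ≠ 0 := by positivity
  -- N and T
  have hN' : N = 2 * P * m := by
    rw [hN]
    simp only [hmm, Fin.sum_univ_two, Finset.sum_const, Finset.card_univ, Fintype.card_fin,
      nsmul_eq_mul]
    ring
  have hT' : T = P * m := by
    rw [hT]
    simp only [hmm, Fin.sum_univ_two]
    rw [Finset.sum_congr rfl (fun p _ => by rw [← mul_add, hWpair p, mul_one])]
    simp [Finset.sum_const, Finset.card_univ, mul_comm]
  have hWbar' : Wbar = 1 / 2 := by
    rw [hWbar, hT', hN']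
    field_simp
  -- key per-pair identity
  have key : ∀ p, (∑ g : Fin 2, ∑ i : Fin (n p g), (W p g - Wbar) * ε p g i)
      = (m / 2) * (τp p - τhat) := by
    intro p
    have h1 : W p 1 = 1 - W p 0 := by linarith [hWpair p]
    have hτp' := hτp p
    rw [hnp p] at hτp'
    have e0 : ∀ i, (W p 0 - Wbar) * ε p 0 i
        = (W p 0 - Wbar) * Y p 0 i + (-(W p 0 - Wbar) * Ybar - τhat * (W p 0 - Wbar) ^ 2) := by
      intro i; rw [hε]; ring
    have e1 : ∀ i, (W p 1 - Wbar) * ε p 1 i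
        = (W p 1 - Wbar) * Y p 1 i + (-(W p 1 - Wbar) * Ybar - τhat * (W p 1 - Wbar) ^ 2) := by
      intro i; rw [hε]; ring
    rw [Fin.sum_univ_two, Finset.sum_congr rfl (fun i _ => e0 i),
      Finset.sum_congr rfl (fun i _ => e1 i), sum_aff', sum_aff']
    rw [Fin.sum_univ_two] at hτp'
    have c0 : ((n p 0 : ℕ) : ℝ) = m := by exact_mod_cast congrArg Nat.cast (hmm p 0)
    have c1 : ((n p 1 : ℕ) : ℝ) = m := by exact_mod_cast congrArg Nat.cast (hmm p 1)
    rw [hτp', hWbar', h1, c0, c1]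
    rcases hW01 p 0 with h0 | h0 <;> rw [h0] <;> field_simp <;> ring
  -- denominator
  have hden : (∑ p : Fin P, ∑ g : Fin 2, ∑ i : Fin (n p g), (W p g - Wbar) ^ 2)
      = P * m / 2 := by
    have hsq : ∀ p g, ∑ i : Fin (n p g), (W p g - Wbar) ^ 2 = (m : ℝ) * (1 / 4) := by
      intro p g
      rw [Finset.sum_const, Finset.card_univ, Fintype.card_fin, nsmul_eq_mul, hmm p g]
      congr 1
      rw [hWbar']
      rcases hW01 p g with h | h <;> rw [h] <;> norm_num
    simp only [hsq, Fin.sum_univ_two, Finset.sum_const, Finset.card_univ, Fintype.card_fin,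
      nsmul_eq_mul]
    ring
  rw [hVpair, hden, Finset.sum_congr rfl (fun p _ => by rw [key p])]
  have hsum : (∑ p : Fin P, ((m : ℝ) / 2 * (τp p - τhat)) ^ 2)
      = ((m : ℝ) / 2) ^ 2 * ∑ p : Fin P, (τp p - τhat) ^ 2 := by
    rw [Finset.mul_sum]
    exact Finset.sum_congr rfl (fun p _ => by ring)
  rw [hsum]
  field_simp
end

section
/- E[V̂_pair] = (1 − 1/P)·Var(τ̂) + (1/P²)Σ_{p=1}^P (τ_p − τ)². Consequently E[(P/(P−1))·V̂_pair] ≥ Var(τ̂), with equality when τ_p = τ for all p (constant average treatment effect across pairs). -/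
open Finset MeasureTheory ProbabilityTheory

/-- For `P ≥ 2` independent square-integrable within-pair estimators `τ̂_p`,
`E[V̂_pair] = (1 − 1/P) Var(τ̂) + (1/P²) Σ_p (τ_p − τ)²`; consequently
`E[(P/(P−1)) V̂_pair] ≥ Var(τ̂)`, with equality when `τ_p = τ` for all `p`. -/
theorem expectation_pair_clustered_variance_estimator
    {Ω : Type*} [MeasureSpace Ω] [IsProbabilityMeasure (ℙ : Measure Ω)]
    (P : ℕ) (hP : 2 ≤ P)
    (τhat : Fin P → Ω → ℝ)
    (hmeas : ∀ p, Measurable (τhat p))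
    (hindep : iIndepFun τhat ℙ)
    (hL2 : ∀ p, MemLp (τhat p) 2 ℙ)
    (τp : Fin P → ℝ) (hτp : ∀ p, τp p = ∫ ω, τhat p ω)
    (τ : ℝ) (hτ : τ = (∑ p : Fin P, τp p) / P)
    (τbar : Ω → ℝ) (hτbar : ∀ ω, τbar ω = (∑ p : Fin P, τhat p ω) / P)
    (Vpair : Ω → ℝ)
    (hVpair : ∀ ω, Vpair ω = (∑ p : Fin P, (τhat p ω - τbar ω) ^ 2) / (P : ℝ) ^ 2) :
    (∫ ω, Vpair ω)
      = (1 - 1 / (P : ℝ)) * variance τbar ℙ + (∑ p : Fin P, (τp p - τ) ^ 2) / (P : ℝ) ^ 2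
    ∧ variance τbar ℙ ≤ ((P : ℝ) / ((P : ℝ) - 1)) * ∫ ω, Vpair ω
    ∧ ((∀ p, τp p = τ) →
        ((P : ℝ) / ((P : ℝ) - 1)) * (∫ ω, Vpair ω) = variance τbar ℙ) := by
  have hP2 : (2 : ℝ) ≤ (P : ℝ) := by exact_mod_cast hP
  have hPpos : (0 : ℝ) < (P : ℝ) := by linarith
  have hPne : (P : ℝ) ≠ 0 := ne_of_gt hPpos
  -- rewrite τbar as a scalar multiple of a sum of functions
  have hτbar' : τbar = (P : ℝ)⁻¹ • (∑ p : Fin P, τhat p) := by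
    funext ω
    simp [hτbar, Finset.sum_apply, div_eq_inv_mul]
  have hsumL2 : MemLp (∑ p : Fin P, τhat p) 2 ℙ :=
    memLp_finset_sum' _ (fun p _ => hL2 p)
  have hτbarL2 : MemLp τbar 2 ℙ := by
    rw [hτbar']; exact hsumL2.const_smul _
  -- variance of the mean
  have hVarSum : variance (∑ p : Fin P, τhat p) ℙ = ∑ p : Fin P, variance (τhat p) ℙ := by
    refine IndepFun.variance_sum (fun p _ => hL2 p) ?_
    intro i _ j _ hij
    exact hindep.indepFun hij
  have hVbar : variance τbar ℙ = (∑ p : Fin P, variance (τhat p) ℙ) / (P : ℝ) ^ 2 := by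
    rw [hτbar', variance_smul, hVarSum]
    field_simp
  -- pointwise expansion of Vpair
  have hsum_eq : ∀ ω, ∑ p : Fin P, τhat p ω = (P : ℝ) * τbar ω := by
    intro ω; rw [hτbar]; field_simp
  have expand : ∀ ω, Vpair ω =
      ((∑ p : Fin P, (τhat p ω) ^ 2) - (P : ℝ) * (τbar ω) ^ 2) / (P : ℝ) ^ 2 := by
    intro ω
    rw [hVpair]
    congr 1
    have h1 : ∀ p : Fin P, (τhat p ω - τbar ω) ^ 2
        = (τhat p ω) ^ 2 - 2 * τbar ω * τhat p ω + τbar ω ^ 2 := fun p => by ring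
    simp_rw [h1]
    rw [Finset.sum_add_distrib, Finset.sum_sub_distrib, ← Finset.mul_sum, hsum_eq,
      Finset.sum_const, Finset.card_fin, nsmul_eq_mul]
    ring
  -- integrals of squares
  have hint_sq : ∀ p : Fin P, Integrable (fun ω => (τhat p ω) ^ 2) ℙ := fun p =>
    (hL2 p).integrable_sq
  have hint_bsq : Integrable (fun ω => (τbar ω) ^ 2) ℙ := hτbarL2.integrable_sq
  have hvar_def : ∀ (X : Ω → ℝ), MemLp X 2 ℙ →
      ∫ ω, (X ω) ^ 2 = variance X ℙ + (∫ ω, X ω) ^ 2 := by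
    intro X hX
    have := variance_eq_sub (μ := (ℙ : Measure Ω)) hX
    simp only [Pi.pow_apply] at this
    linarith
  -- mean of τbar
  have hEbar : ∫ ω, τbar ω = τ := by
    have : ∫ ω, τbar ω = (∑ p : Fin P, ∫ ω, τhat p ω) / (P : ℝ) := by
      simp_rw [hτbar]
      rw [integral_div, integral_finset_sum _ (fun p _ => (hL2 p).integrable one_le_two)]
    rw [this, hτ]
    congr 1
    exact (Finset.sum_congr rfl fun p _ => (hτp p)).symm
  -- main integral computation
  have hI : ∫ ω, Vpair ω =
      ((∑ p : Fin P, (variance (τhat p) ℙ + (τp p) ^ 2)) - (P : ℝ) * (variance τbar ℙ + τ ^ 2))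
        / (P : ℝ) ^ 2 := by
    simp_rw [expand]
    rw [integral_div, integral_sub ((integrable_finset_sum _ (fun p _ => hint_sq p)))
        (hint_bsq.const_mul _),
      integral_finset_sum _ (fun p _ => hint_sq p), integral_const_mul]
    congr 2
    · exact Finset.sum_congr rfl fun p _ => by
        rw [hvar_def _ (hL2 p), ← hτp p]
    · rw [hvar_def _ hτbarL2, hEbar]
  -- sum of means
  have hsumτ : ∑ p : Fin P, τp p = (P : ℝ) * τ := by
    rw [hτ]; field_simp
  have hS : ∑ p : Fin P, (τp p - τ) ^ 2 = (∑ p : Fin P, (τp p) ^ 2) - (P : ℝ) * τ ^ 2 := by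
    have h1 : ∀ p : Fin P, (τp p - τ) ^ 2 = (τp p) ^ 2 - 2 * τ * τp p + τ ^ 2 := fun p => by ring
    simp_rw [h1]
    rw [Finset.sum_add_distrib, Finset.sum_sub_distrib, ← Finset.mul_sum, hsumτ,
      Finset.sum_const, Finset.card_fin, nsmul_eq_mul]
    ring
  have hsumVar : ∑ p : Fin P, variance (τhat p) ℙ = (P : ℝ) ^ 2 * variance τbar ℙ := by
    rw [hVbar]; field_simp
  -- Part 1
  have main : (∫ ω, Vpair ω)
      = (1 - 1 / (P : ℝ)) * variance τbar ℙ
        + (∑ p : Fin P, (τp p - τ) ^ 2) / (P : ℝ) ^ 2 := by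
    rw [hI, hS, Finset.sum_add_distrib, hsumVar]
    field_simp
    ring
  refine ⟨main, ?_, ?_⟩
  · have hSnn : 0 ≤ ∑ p : Fin P, (τp p - τ) ^ 2 :=
      Finset.sum_nonneg fun p _ => sq_nonneg _
    have hP1 : (0 : ℝ) < (P : ℝ) - 1 := by linarith
    rw [main, ← sub_nonneg]
    have : ((P : ℝ) / ((P : ℝ) - 1)) * ((1 - 1 / (P : ℝ)) * variance τbar ℙ
        + (∑ p : Fin P, (τp p - τ) ^ 2) / (P : ℝ) ^ 2) - variance τbar ℙ
        = ((P : ℝ) / ((P : ℝ) - 1)) * ((∑ p : Fin P, (τp p - τ) ^ 2) / (P : ℝ) ^ 2) := by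
      field_simp
      ring
    rw [this]
    positivity
  · intro hconst
    have hS0 : ∑ p : Fin P, (τp p - τ) ^ 2 = 0 := by
      apply Finset.sum_eq_zero
      intro p _
      rw [hconst p]; ring
    rw [main, hS0]
    have hP1 : ((P : ℝ) - 1) ≠ 0 := by intro h; linarith [hP2]
    field_simp
    ring
end

section
/- If n_{1p} = n_{2p} for every pair p, then the pair-clustered variance estimator of the fixed-effects estimator equals twice the unit-clustered one: V̂_pair(τ̂_fe) = 2·V̂_unit(τ̂_fe). -/
open Finset

/-- If the two randomization units in each pair have the same number of observations
(`n_{1p} = n_{2p}` for every `p`), then the pair-clustered variance estimator of the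
fixed-effects estimator equals twice the unit-clustered one:
`V̂_pair(τ̂_fe) = 2 V̂_unit(τ̂_fe)`. -/
theorem pair_clustered_eq_twice_unit_clustered_fe
    (P : ℕ) (hP : 1 ≤ P)
    (n : Fin P → Fin 2 → ℕ) (hn : ∀ p g, 1 ≤ n p g)
    (hbal : ∀ p, n p 0 = n p 1)
    (W : Fin P → Fin 2 → ℝ)
    (hW01 : ∀ p g, W p g = 0 ∨ W p g = 1)
    (hWpair : ∀ p, W p 0 + W p 1 = 1)
    (Y : (p : Fin P) → (g : Fin 2) → Fin (n p g) → ℝ)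
    (w : Fin P → ℝ)
    (hw : ∀ p, w p = (1 / (n p 0 : ℝ) + 1 / (n p 1 : ℝ))⁻¹
        / ∑ p' : Fin P, (1 / (n p' 0 : ℝ) + 1 / (n p' 1 : ℝ))⁻¹)
    (τfe : ℝ)
    (hτfe : τfe = ∑ p : Fin P, w p * ∑ g : Fin 2,
        (2 * W p g - 1) * (∑ i : Fin (n p g), Y p g i) / (n p g : ℝ))
    (Tp np Wbarp Ybarp : Fin P → ℝ)
    (hTp : ∀ p, Tp p = ∑ g : Fin 2, (n p g : ℝ) * W p g)
    (hnp : ∀ p, np p = (n p 0 : ℝ) + (n p 1 : ℝ))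
    (hWbarp : ∀ p, Wbarp p = Tp p / np p)
    (hYbarp : ∀ p, Ybarp p = (∑ g : Fin 2, ∑ i : Fin (n p g), Y p g i) / np p)
    (u : (p : Fin P) → (g : Fin 2) → Fin (n p g) → ℝ)
    (hu : ∀ p g i, u p g i = Y p g i - Ybarp p - τfe * (W p g - Wbarp p))
    (SETfe : Fin P → ℝ)
    (hSETfe : ∀ p, SETfe p = ∑ g : Fin 2, ∑ i : Fin (n p g), W p g * u p g i)
    (Vpairfe Vunitfe : ℝ)
    (hVpairfe : Vpairfe
        = (∑ p : Fin P, (∑ g : Fin 2, ∑ i : Fin (n p g), (W p g - Wbarp p) * u p g i) ^ 2)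
        / (∑ p : Fin P, ∑ g : Fin 2, ∑ i : Fin (n p g), (W p g - Wbarp p) ^ 2) ^ 2)
    (hVunitfe : Vunitfe
        = (∑ p : Fin P, ∑ g : Fin 2, ((W p g - Wbarp p) * ∑ i : Fin (n p g), u p g i) ^ 2)
        / (∑ p : Fin P, ∑ g : Fin 2, ∑ i : Fin (n p g), (W p g - Wbarp p) ^ 2) ^ 2) :
    Vpairfe = 2 * Vunitfe := by
  have hn0 : ∀ p : Fin P, ((n p 0 : ℝ)) ≠ 0 := fun p =>
    Nat.cast_ne_zero.mpr (Nat.one_le_iff_ne_zero.mp (hn p 0))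
  have hWbar : ∀ p, Wbarp p = 1 / 2 := by
    intro p
    have h0 := hn0 p
    have hb : ((n p 1 : ℝ)) = (n p 0 : ℝ) := by rw [hbal p]
    rw [hWbarp, hTp, hnp, Fin.sum_univ_two, hb]
    rw [← mul_add, hWpair p]
    field_simp
    ring
  have hS : ∀ p, (∑ i, u p 1 i) = -(∑ i, u p 0 i) := by
    intro p
    have h0 := hn0 p
    have hb : ((n p 1 : ℝ)) = (n p 0 : ℝ) := by rw [hbal p]
    have key : ∀ g, (∑ i : Fin (n p g), u p g i)
        = (∑ i : Fin (n p g), Y p g i) - (n p g : ℝ) * Ybarp p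
          - (n p g : ℝ) * (τfe * (W p g - Wbarp p)) := by
      intro g
      simp only [hu, Finset.sum_sub_distrib, Finset.sum_const, Finset.card_univ,
        Fintype.card_fin, nsmul_eq_mul]
    have hYb : Ybarp p * ((n p 0 : ℝ) + (n p 0 : ℝ))
        = (∑ i : Fin (n p 0), Y p 0 i) + (∑ i : Fin (n p 1), Y p 1 i) := by
      rw [hYbarp, hnp, Fin.sum_univ_two, hb]
      field_simp
    have k0 := key 0
    have k1 := key 1
    rw [hb] at k1
    rw [hWbar p] at k0 k1
    have hw1 : W p 1 - 1 / 2 = -(W p 0 - 1 / 2) := by linarith [hWpair p]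
    rw [hw1] at k1
    rw [k0, k1]
    linarith [hYb]
  rw [hVpairfe, hVunitfe, ← mul_div_assoc]
  congr 1
  rw [Finset.mul_sum]
  refine Finset.sum_congr rfl fun p _ => ?_
  simp only [← Finset.mul_sum]
  rw [Fin.sum_univ_two, Fin.sum_univ_two, hS p, hWbar p]
  have hw1 : W p 1 - 1 / 2 = -(W p 0 - 1 / 2) := by linarith [hWpair p]
  rw [hw1]
  ring
end

section
/- Under the balanced-design assumption n_{1p} = n_{2p} = n/(2P) for all p, the three clustered variance estimators satisfy V̂_pair(τ̂) = V̂_pair(τ̂_fe) = 2·V̂_unit(τ̂_fe). -/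
open Finset

/-- Under the balanced-design assumption `n_{1p} = n_{2p} = n/(2P)` for all `p`, the three
clustered variance estimators satisfy `V̂_pair(τ̂) = V̂_pair(τ̂_fe) = 2 V̂_unit(τ̂_fe)`. -/
theorem clustered_variance_estimators_balanced_design
    (P : ℕ) (hP : 1 ≤ P)
    (n : Fin P → Fin 2 → ℕ) (hn : ∀ p g, 1 ≤ n p g)
    (hbal : ∀ p g, n p g * (2 * P) = ∑ p' : Fin P, ∑ g' : Fin 2, n p' g')
    (W : Fin P → Fin 2 → ℝ)
    (hW01 : ∀ p g, W p g = 0 ∨ W p g = 1)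
    (hWpair : ∀ p, W p 0 + W p 1 = 1)
    (Y : (p : Fin P) → (g : Fin 2) → Fin (n p g) → ℝ)
    (N T C Wbar Ybar τhat : ℝ)
    (hN : N = ∑ p : Fin P, ∑ g : Fin 2, (n p g : ℝ))
    (hT : T = ∑ p : Fin P, ∑ g : Fin 2, (n p g : ℝ) * W p g)
    (hC : C = ∑ p : Fin P, ∑ g : Fin 2, (n p g : ℝ) * (1 - W p g))
    (hWbar : Wbar = T / N)
    (hYbar : Ybar = (∑ p : Fin P, ∑ g : Fin 2, ∑ i : Fin (n p g), Y p g i) / N)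
    (hτ : τhat = (∑ p : Fin P, ∑ g : Fin 2, ∑ i : Fin (n p g), W p g * Y p g i) / T
        - (∑ p : Fin P, ∑ g : Fin 2, ∑ i : Fin (n p g), (1 - W p g) * Y p g i) / C)
    (ε : (p : Fin P) → (g : Fin 2) → Fin (n p g) → ℝ)
    (hε : ∀ p g i, ε p g i = Y p g i - Ybar - τhat * (W p g - Wbar))
    (Vpair : ℝ)
    (hVpair : Vpair = (∑ p : Fin P,
        (∑ g : Fin 2, ∑ i : Fin (n p g), (W p g - Wbar) * ε p g i) ^ 2)
        / (∑ p : Fin P, ∑ g : Fin 2, ∑ i : Fin (n p g), (W p g - Wbar) ^ 2) ^ 2)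
    (w : Fin P → ℝ)
    (hw : ∀ p, w p = (1 / (n p 0 : ℝ) + 1 / (n p 1 : ℝ))⁻¹
        / ∑ p' : Fin P, (1 / (n p' 0 : ℝ) + 1 / (n p' 1 : ℝ))⁻¹)
    (τfe : ℝ)
    (hτfe : τfe = ∑ p : Fin P, w p * ∑ g : Fin 2,
        (2 * W p g - 1) * (∑ i : Fin (n p g), Y p g i) / (n p g : ℝ))
    (Tp np Wbarp Ybarp : Fin P → ℝ)
    (hTp : ∀ p, Tp p = ∑ g : Fin 2, (n p g : ℝ) * W p g)
    (hnp : ∀ p, np p = (n p 0 : ℝ) + (n p 1 : ℝ))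
    (hWbarp : ∀ p, Wbarp p = Tp p / np p)
    (hYbarp : ∀ p, Ybarp p = (∑ g : Fin 2, ∑ i : Fin (n p g), Y p g i) / np p)
    (u : (p : Fin P) → (g : Fin 2) → Fin (n p g) → ℝ)
    (hu : ∀ p g i, u p g i = Y p g i - Ybarp p - τfe * (W p g - Wbarp p))
    (Vpairfe Vunitfe : ℝ)
    (hVpairfe : Vpairfe
        = (∑ p : Fin P, (∑ g : Fin 2, ∑ i : Fin (n p g), (W p g - Wbarp p) * u p g i) ^ 2)
        / (∑ p : Fin P, ∑ g : Fin 2, ∑ i : Fin (n p g), (W p g - Wbarp p) ^ 2) ^ 2)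
    (hVunitfe : Vunitfe
        = (∑ p : Fin P, ∑ g : Fin 2, ((W p g - Wbarp p) * ∑ i : Fin (n p g), u p g i) ^ 2)
        / (∑ p : Fin P, ∑ g : Fin 2, ∑ i : Fin (n p g), (W p g - Wbarp p) ^ 2) ^ 2) :
    Vpair = Vpairfe ∧ Vpairfe = 2 * Vunitfe := by
  have hP2 : 0 < 2 * P := by omega
  obtain ⟨m, hm1, hnm⟩ : ∃ m : ℕ, 1 ≤ m ∧ ∀ p g, n p g = m :=
    ⟨n ⟨0, hP⟩ 0, hn _ _, fun p g =>
      Nat.eq_of_mul_eq_mul_right hP2 ((hbal p g).trans (hbal ⟨0, hP⟩ 0).symm)⟩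
  have hMcast : ∀ p g, ((n p g : ℕ) : ℝ) = (m : ℝ) := fun p g => by rw [hnm p g]
  have hM0 : (0:ℝ) < (m:ℝ) := by exact_mod_cast hm1
  have hMne : (m:ℝ) ≠ 0 := ne_of_gt hM0
  have hPR : (0:ℝ) < (P:ℝ) := by exact_mod_cast hP
  have hPne : (P:ℝ) ≠ 0 := ne_of_gt hPR
  have hconst : ∀ (p : Fin P) (g : Fin 2) (c : ℝ),
      (∑ _i : Fin (n p g), c) = (m:ℝ) * c := by
    intro p g c
    rw [Finset.sum_const, Finset.card_univ, Fintype.card_fin, nsmul_eq_mul, hMcast p g]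
  have hsq : ∀ p g, (W p g - 1/2)^2 = 1/4 := by
    intro p g
    rcases hW01 p g with h | h <;> rw [h] <;> norm_num
  have hW1 : ∀ p, W p 1 = 1 - W p 0 := fun p => by linarith [hWpair p]
  have hT' : T = (m:ℝ) * P := by
    rw [hT]
    have h1 : ∀ p : Fin P, (∑ g : Fin 2, (n p g : ℝ) * W p g) = (m:ℝ) := by
      intro p
      rw [Fin.sum_univ_two, hMcast p 0, hMcast p 1, ← mul_add, hWpair p, mul_one]
    rw [Finset.sum_congr rfl fun p _ => h1 p, Finset.sum_const, Finset.card_univ,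
      Fintype.card_fin, nsmul_eq_mul, mul_comm]
  have hC' : C = (m:ℝ) * P := by
    rw [hC]
    have h1 : ∀ p : Fin P, (∑ g : Fin 2, (n p g : ℝ) * (1 - W p g)) = (m:ℝ) := by
      intro p
      rw [Fin.sum_univ_two, hMcast p 0, hMcast p 1, ← mul_add]
      have : 1 - W p 0 + (1 - W p 1) = 1 := by linarith [hWpair p]
      rw [this, mul_one]
    rw [Finset.sum_congr rfl fun p _ => h1 p, Finset.sum_const, Finset.card_univ,
      Fintype.card_fin, nsmul_eq_mul, mul_comm]
  have hN' : N = 2 * (P:ℝ) * m := by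
    rw [hN]
    have h1 : ∀ p : Fin P, (∑ g : Fin 2, (n p g : ℝ)) = 2 * (m:ℝ) := by
      intro p
      rw [Fin.sum_univ_two, hMcast p 0, hMcast p 1]; ring
    rw [Finset.sum_congr rfl fun p _ => h1 p, Finset.sum_const, Finset.card_univ,
      Fintype.card_fin, nsmul_eq_mul]
    ring
  have h2PM : (2:ℝ) * P * m ≠ 0 := by
    refine mul_ne_zero (mul_ne_zero two_ne_zero hPne) hMne
  have hWbar' : Wbar = 1/2 := by
    rw [hWbar, hT', hN', div_eq_div_iff h2PM two_ne_zero]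
    ring
  have hWbarp' : ∀ p, Wbarp p = 1/2 := by
    intro p
    have hmm : (m:ℝ) + (m:ℝ) ≠ 0 := by positivity
    rw [hWbarp, hTp, hnp, Fin.sum_univ_two, hMcast p 0, hMcast p 1, ← mul_add,
      hWpair p, mul_one, div_eq_div_iff hmm two_ne_zero]
    ring
  have hYb : ∀ p, (m:ℝ) * 2 * Ybarp p
      = (∑ i : Fin (n p 0), Y p 0 i) + (∑ i : Fin (n p 1), Y p 1 i) := by
    intro p
    have hmm : (m:ℝ) + (m:ℝ) ≠ 0 := by positivity
    rw [hYbarp, hnp, Fin.sum_univ_two, hMcast p 0, hMcast p 1]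
    field_simp
    ring
  -- common closed form for both estimators
  have hτ1 : τhat = (∑ p : Fin P, ((2 * W p 0 - 1) * (∑ i : Fin (n p 0), Y p 0 i)
      + (2 * W p 1 - 1) * (∑ i : Fin (n p 1), Y p 1 i))) / ((m:ℝ) * P) := by
    rw [hτ, hT', hC', div_sub_div_same, ← Finset.sum_sub_distrib]
    congr 1
    refine Finset.sum_congr rfl fun p _ => ?_
    rw [Fin.sum_univ_two, Fin.sum_univ_two, ← Finset.mul_sum, ← Finset.mul_sum,
      ← Finset.mul_sum, ← Finset.mul_sum]
    ring
  have hwp : ∀ p, w p = 1 / (P:ℝ) := by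
    intro p
    have ha : (1/(m:ℝ) + 1/(m:ℝ))⁻¹ = (m:ℝ)/2 := by
      rw [show (1:ℝ)/(m:ℝ) + 1/(m:ℝ) = 2/(m:ℝ) by ring, inv_div]
    rw [hw, hMcast p 0, hMcast p 1,
      Finset.sum_congr rfl fun p' _ => by rw [hMcast p' 0, hMcast p' 1],
      Finset.sum_const, Finset.card_univ, Fintype.card_fin, nsmul_eq_mul, ha]
    field_simp
  have hτ2 : τfe = (∑ p : Fin P, ((2 * W p 0 - 1) * (∑ i : Fin (n p 0), Y p 0 i)
      + (2 * W p 1 - 1) * (∑ i : Fin (n p 1), Y p 1 i))) / ((m:ℝ) * P) := by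
    rw [hτfe]
    have h2 : ∀ p : Fin P,
        w p * ∑ g : Fin 2, (2 * W p g - 1) * (∑ i : Fin (n p g), Y p g i) / (n p g : ℝ)
        = ((2 * W p 0 - 1) * (∑ i : Fin (n p 0), Y p 0 i)
          + (2 * W p 1 - 1) * (∑ i : Fin (n p 1), Y p 1 i)) / ((m:ℝ) * P) := by
      intro p
      rw [hwp p, Fin.sum_univ_two, hMcast p 0, hMcast p 1, ← add_div,
        one_div, inv_mul_eq_div, div_div]
    rw [Finset.sum_congr rfl fun p _ => h2 p, ← Finset.sum_div]
  have hττ : τhat = τfe := hτ1.trans hτ2.symm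
  have hεsum : ∀ p g, (∑ i : Fin (n p g), ε p g i)
      = (∑ i : Fin (n p g), Y p g i) - (m:ℝ) * Ybar - (m:ℝ) * τhat * (W p g - 1/2) := by
    intro p g
    have h3 : ∀ i : Fin (n p g), ε p g i = Y p g i - (Ybar + τhat * (W p g - 1/2)) := by
      intro i; rw [hε, hWbar']; ring
    rw [Finset.sum_congr rfl fun i _ => h3 i, Finset.sum_sub_distrib, hconst p g]
    ring
  have husum : ∀ p g, (∑ i : Fin (n p g), u p g i)
      = (∑ i : Fin (n p g), Y p g i) - (m:ℝ) * Ybarp p - (m:ℝ) * τfe * (W p g - 1/2) := by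
    intro p g
    have h3 : ∀ i : Fin (n p g), u p g i = Y p g i - (Ybarp p + τfe * (W p g - 1/2)) := by
      intro i; rw [hu, hWbarp']; ring
    rw [Finset.sum_congr rfl fun i _ => h3 i, Finset.sum_sub_distrib, hconst p g]
    ring
  have hEpair : ∀ p, (∑ g : Fin 2, ∑ i : Fin (n p g), (W p g - Wbar) * ε p g i)
      = (W p 0 - 1/2) * ((∑ i : Fin (n p 0), Y p 0 i) - (∑ i : Fin (n p 1), Y p 1 i))
        - (m:ℝ) * τhat / 2 := by
    intro p
    rw [Fin.sum_univ_two, ← Finset.mul_sum, ← Finset.mul_sum, hεsum p 0, hεsum p 1,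
      hWbar', hW1 p]
    linear_combination (-2 * (m:ℝ) * τhat) * hsq p 0
  have hFpair : ∀ p, (∑ g : Fin 2, ∑ i : Fin (n p g), (W p g - Wbarp p) * u p g i)
      = (W p 0 - 1/2) * ((∑ i : Fin (n p 0), Y p 0 i) - (∑ i : Fin (n p 1), Y p 1 i))
        - (m:ℝ) * τfe / 2 := by
    intro p
    rw [Fin.sum_univ_two, ← Finset.mul_sum, ← Finset.mul_sum, husum p 0, husum p 1,
      hWbarp' p, hW1 p]
    linear_combination (-2 * (m:ℝ) * τfe) * hsq p 0
  have hden : (∑ p : Fin P, ∑ g : Fin 2, ∑ i : Fin (n p g), (W p g - Wbar) ^ 2)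
      = (∑ p : Fin P, ∑ g : Fin 2, ∑ i : Fin (n p g), (W p g - Wbarp p) ^ 2) := by
    refine Finset.sum_congr rfl fun p _ => Finset.sum_congr rfl fun g _ =>
      Finset.sum_congr rfl fun i _ => ?_
    rw [hWbar', hWbarp']
  have hU : ∀ p, (∑ i : Fin (n p 1), u p 1 i) = -(∑ i : Fin (n p 0), u p 0 i) := by
    intro p
    rw [husum p 0, husum p 1, hW1 p]
    linear_combination - hYb p
  have hpair2 : ∀ p, (∑ g : Fin 2, ∑ i : Fin (n p g), (W p g - Wbarp p) * u p g i) ^ 2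
      = 2 * (∑ g : Fin 2, ((W p g - Wbarp p) * ∑ i : Fin (n p g), u p g i) ^ 2) := by
    intro p
    rw [Fin.sum_univ_two, Fin.sum_univ_two, ← Finset.mul_sum, ← Finset.mul_sum,
      hWbarp' p, hU p, hW1 p]
    ring
  constructor
  · rw [hVpair, hVpairfe, hden]
    congr 1
    refine Finset.sum_congr rfl fun p _ => ?_
    rw [hEpair p, hFpair p, hττ]
  · rw [hVpairfe, hVunitfe, Finset.sum_congr rfl fun p _ => hpair2 p,
      ← Finset.mul_sum, mul_div_assoc]
end

section
/- Under the balanced-design assumption n_{1p} = n_{2p} = n/(2P) for all p, the difference of the two variance estimators of the difference-in-means estimator satisfies V̂_unit(τ̂) − V̂_pair(τ̂) = (2/P²)Σ_{p=1}^P Ŷ_p(1)Ŷ_p(0) − (2/P)Ŷ(1)Ŷ(0), where Ȳ_{gp} = (1/n_{gp})Σ_i Y_{igp}, Ŷ_p(1) = Σ_g W_{gp}Ȳ_{gp}, Ŷ_p(0) = Σ_g (1−W_{gp})Ȳ_{gp}, and Ŷ(d) = (1/P)Σ_p Ŷ_p(d) for d = 0,1. -/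
open Finset

/-- Under the balanced-design assumption `n_{1p} = n_{2p} = n/(2P)` for all `p`, the
difference of the unit- and pair-clustered variance estimators of the difference-in-means
estimator satisfies
`V̂_unit(τ̂) − V̂_pair(τ̂) = (2/P²) Σ_p Ŷ_p(1)Ŷ_p(0) − (2/P) Ŷ(1)Ŷ(0)`. -/
theorem diff_unit_pair_clustered_variance_balanced
    (P : ℕ) (hP : 1 ≤ P)
    (n : Fin P → Fin 2 → ℕ) (hn : ∀ p g, 1 ≤ n p g)
    (hbal : ∀ p g, n p g * (2 * P) = ∑ p' : Fin P, ∑ g' : Fin 2, n p' g')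
    (W : Fin P → Fin 2 → ℝ)
    (hW01 : ∀ p g, W p g = 0 ∨ W p g = 1)
    (hWpair : ∀ p, W p 0 + W p 1 = 1)
    (Y : (p : Fin P) → (g : Fin 2) → Fin (n p g) → ℝ)
    (N T C Wbar Ybar τhat : ℝ)
    (hN : N = ∑ p : Fin P, ∑ g : Fin 2, (n p g : ℝ))
    (hT : T = ∑ p : Fin P, ∑ g : Fin 2, (n p g : ℝ) * W p g)
    (hC : C = ∑ p : Fin P, ∑ g : Fin 2, (n p g : ℝ) * (1 - W p g))
    (hWbar : Wbar = T / N)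
    (hYbar : Ybar = (∑ p : Fin P, ∑ g : Fin 2, ∑ i : Fin (n p g), Y p g i) / N)
    (hτ : τhat = (∑ p : Fin P, ∑ g : Fin 2, ∑ i : Fin (n p g), W p g * Y p g i) / T
        - (∑ p : Fin P, ∑ g : Fin 2, ∑ i : Fin (n p g), (1 - W p g) * Y p g i) / C)
    (ε : (p : Fin P) → (g : Fin 2) → Fin (n p g) → ℝ)
    (hε : ∀ p g i, ε p g i = Y p g i - Ybar - τhat * (W p g - Wbar))
    (Vpair Vunit : ℝ)
    (hVpair : Vpair = (∑ p : Fin P,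
        (∑ g : Fin 2, ∑ i : Fin (n p g), (W p g - Wbar) * ε p g i) ^ 2)
        / (∑ p : Fin P, ∑ g : Fin 2, ∑ i : Fin (n p g), (W p g - Wbar) ^ 2) ^ 2)
    (hVunit : Vunit = (∑ p : Fin P, ∑ g : Fin 2,
        ((W p g - Wbar) * ∑ i : Fin (n p g), ε p g i) ^ 2)
        / (∑ p : Fin P, ∑ g : Fin 2, ∑ i : Fin (n p g), (W p g - Wbar) ^ 2) ^ 2)
    (Ybargp : (p : Fin P) → Fin 2 → ℝ)
    (hYbargp : ∀ p g, Ybargp p g = (∑ i : Fin (n p g), Y p g i) / (n p g : ℝ))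
    (Yhat1 Yhat0 : Fin P → ℝ)
    (hYhat1 : ∀ p, Yhat1 p = ∑ g : Fin 2, W p g * Ybargp p g)
    (hYhat0 : ∀ p, Yhat0 p = ∑ g : Fin 2, (1 - W p g) * Ybargp p g)
    (Ybar1 Ybar0 : ℝ)
    (hYbar1 : Ybar1 = (∑ p : Fin P, Yhat1 p) / P)
    (hYbar0 : Ybar0 = (∑ p : Fin P, Yhat0 p) / P) :
    Vunit - Vpair
      = (2 / (P : ℝ) ^ 2) * ∑ p : Fin P, Yhat1 p * Yhat0 p
        - (2 / (P : ℝ)) * (Ybar1 * Ybar0) := by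
  have hP0 : (P : ℝ) ≠ 0 := by
    exact_mod_cast Nat.pos_of_ne_zero (by omega) |>.ne'
  have p0 : Fin P := ⟨0, hP⟩
  -- all group sizes are equal
  have hm : ∀ p g, n p g = n p0 0 := by
    intro p g
    have h1 := hbal p g
    have h2 := hbal p0 0
    have h2P : 0 < 2 * P := by omega
    exact Nat.eq_of_mul_eq_mul_right h2P (h1.trans h2.symm)
  set M : ℝ := (n p0 0 : ℝ) with hMdef
  have hM0 : M ≠ 0 := by
    have := hn p0 0
    simp only [hMdef]
    exact_mod_cast (Nat.pos_of_ne_zero (by omega)).ne'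
  have hmR : ∀ p g, (n p g : ℝ) = M := by
    intro p g; rw [hm p g]
  have hNval : N = 2 * P * M := by
    rw [hN]
    simp only [Fin.sum_univ_two, hmR]
    rw [Finset.sum_const, card_univ, Fintype.card_fin, nsmul_eq_mul]
    ring
  have hTval : T = P * M := by
    rw [hT]
    simp only [Fin.sum_univ_two, hmR]
    rw [Finset.sum_congr rfl (fun p _ => show M * W p 0 + M * W p 1 = M by
      linear_combination M * hWpair p)]
    rw [Finset.sum_const, card_univ, Fintype.card_fin, nsmul_eq_mul]
  have hCval : C = P * M := by
    rw [hC]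
    simp only [Fin.sum_univ_two, hmR]
    rw [Finset.sum_congr rfl (fun p _ => show M * (1 - W p 0) + M * (1 - W p 1) = M by
      linear_combination (-M) * hWpair p)]
    rw [Finset.sum_const, card_univ, Fintype.card_fin, nsmul_eq_mul]
  have hWbarval : Wbar = 1 / 2 := by
    rw [hWbar, hTval, hNval]
    field_simp
  have hS : ∀ p g, (∑ i : Fin (n p g), Y p g i) = M * Ybargp p g := by
    intro p g
    rw [hYbargp, hmR]
    field_simp
  have hA : ∑ p : Fin P, Yhat1 p = P * Ybar1 := by
    rw [hYbar1]; field_simp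
  have hB : ∑ p : Fin P, Yhat0 p = P * Ybar0 := by
    rw [hYbar0]; field_simp
  have hsum1 : ∑ p : Fin P, ∑ g : Fin 2, ∑ i : Fin (n p g), W p g * Y p g i
      = M * ∑ p : Fin P, Yhat1 p := by
    rw [Finset.mul_sum]
    refine Finset.sum_congr rfl fun p _ => ?_
    rw [hYhat1, Finset.mul_sum]
    refine Finset.sum_congr rfl fun g _ => ?_
    rw [← Finset.mul_sum, hS]
    ring
  have hsum0 : ∑ p : Fin P, ∑ g : Fin 2, ∑ i : Fin (n p g), (1 - W p g) * Y p g i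
      = M * ∑ p : Fin P, Yhat0 p := by
    rw [Finset.mul_sum]
    refine Finset.sum_congr rfl fun p _ => ?_
    rw [hYhat0, Finset.mul_sum]
    refine Finset.sum_congr rfl fun g _ => ?_
    rw [← Finset.mul_sum, hS]
    ring
  have hτval : τhat = Ybar1 - Ybar0 := by
    rw [hτ, hsum1, hsum0, hTval, hCval, hA, hB]
    field_simp
  have hYbarval : Ybar = (Ybar1 + Ybar0) / 2 := by
    rw [hYbar, hNval]
    have hrow : ∀ p : Fin P, ∑ g : Fin 2, ∑ i : Fin (n p g), Y p g i
        = M * (Yhat1 p + Yhat0 p) := by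
      intro p
      rw [Fin.sum_univ_two, hS p 0, hS p 1, hYhat1, hYhat0, Fin.sum_univ_two,
        Fin.sum_univ_two]
      ring
    rw [Finset.sum_congr rfl (fun p _ => hrow p), ← Finset.mul_sum,
      Finset.sum_add_distrib, hA, hB]
    field_simp
  have hWsq : ∀ p g, (W p g - Wbar) ^ 2 = 1 / 4 := by
    intro p g
    rcases hW01 p g with h | h <;> rw [hWbarval, h] <;> norm_num
  have hD : (∑ p : Fin P, ∑ g : Fin 2, ∑ i : Fin (n p g), (W p g - Wbar) ^ 2)
      = P * M / 2 := by
    have hrow : ∀ p : Fin P, ∑ g : Fin 2, ∑ i : Fin (n p g), (W p g - Wbar) ^ 2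
        = M / 2 := by
      intro p
      rw [Fin.sum_univ_two, Finset.sum_const, Finset.sum_const, card_univ, card_univ,
        Fintype.card_fin, Fintype.card_fin, hWsq p 0, hWsq p 1, nsmul_eq_mul,
        nsmul_eq_mul, hmR p 0, hmR p 1]
      ring
    rw [Finset.sum_congr rfl (fun p _ => hrow p), Finset.sum_const, card_univ,
      Fintype.card_fin, nsmul_eq_mul]
    ring
  have hE : ∀ p g, (∑ i : Fin (n p g), ε p g i)
      = M * (Ybargp p g - Ybar - τhat * (W p g - Wbar)) := by
    intro p g
    simp only [hε]
    rw [Finset.sum_sub_distrib, Finset.sum_sub_distrib, Finset.sum_const,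
      Finset.sum_const, card_univ, Fintype.card_fin, hS p g, nsmul_eq_mul,
      nsmul_eq_mul, hmR p g]
    ring
  have key : ∀ p : Fin P,
      (∑ g : Fin 2, ((W p g - Wbar) * ∑ i : Fin (n p g), ε p g i) ^ 2)
        - (∑ g : Fin 2, ∑ i : Fin (n p g), (W p g - Wbar) * ε p g i) ^ 2
      = M ^ 2 / 2 * ((Yhat1 p - Ybar1) * (Yhat0 p - Ybar0)) := by
    intro p
    have ha := hYhat1 p
    have hb := hYhat0 p
    rw [Fin.sum_univ_two] at ha hb
    simp only [← Finset.mul_sum, Fin.sum_univ_two]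
    rw [ha, hb, hE p 0, hE p 1, hWbarval, hτval, hYbarval]
    rcases hW01 p 0 with h | h
    · have h1 : W p 1 = 1 := by linarith [hWpair p]
      rw [h, h1]; ring
    · have h1 : W p 1 = 0 := by linarith [hWpair p]
      rw [h, h1]; ring
  have hexp : ∑ p : Fin P, (Yhat1 p - Ybar1) * (Yhat0 p - Ybar0)
      = (∑ p : Fin P, Yhat1 p * Yhat0 p) - P * (Ybar1 * Ybar0) := by
    have hid : ∀ p : Fin P, (Yhat1 p - Ybar1) * (Yhat0 p - Ybar0)
        = Yhat1 p * Yhat0 p - Ybar0 * Yhat1 p - Ybar1 * Yhat0 p + Ybar1 * Ybar0 :=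
      fun p => by ring
    simp only [hid]
    rw [Finset.sum_add_distrib, Finset.sum_sub_distrib, Finset.sum_sub_distrib,
      ← Finset.mul_sum, ← Finset.mul_sum, hA, hB, Finset.sum_const, card_univ,
      Fintype.card_fin, nsmul_eq_mul]
    ring
  rw [hVunit, hVpair, hD, ← sub_div, ← Finset.sum_sub_distrib,
    Finset.sum_congr rfl (fun p _ => key p), ← Finset.mul_sum, hexp]
  field_simp
end

section
/- If additionally A_1, A_2, B_1, B_2 are square-integrable and there is a real constant c with A_g = B_g + c almost surely for g = 1,2 (constant treatment effect within the pair), then Cov(Ŷ(1), Ŷ(0)) = Cov(B_1, B_2) − (1/4)(E[B_1] − E[B_2])². -/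
open MeasureTheory ProbabilityTheory

/-- For a single pair with unit-mean potential outcomes `A₁, A₂` (treated) and `B₁, B₂`
(untreated), a Bernoulli(1/2) treatment indicator `W` independent of the potential outcomes,
square-integrable potential outcomes, and a constant treatment effect `c` within the pair
(`A_g = B_g + c` a.s.), the covariance of `Ŷ(1) = W A₁ + (1−W) A₂` and
`Ŷ(0) = (1−W) B₁ + W B₂` equals `Cov(B₁, B₂) − (1/4)(E[B₁] − E[B₂])²`. -/
theorem covariance_treated_untreated_means_constant_effect
    {Ω : Type*} [MeasureSpace Ω] [IsProbabilityMeasure (ℙ : Measure Ω)]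
    (A₁ A₂ B₁ B₂ W : Ω → ℝ)
    (hA₁ : Measurable A₁) (hA₂ : Measurable A₂)
    (hB₁ : Measurable B₁) (hB₂ : Measurable B₂) (hW : Measurable W)
    (hW01 : ∀ᵐ ω ∂ℙ, W ω = 0 ∨ W ω = 1)
    (hWhalf : (ℙ : Measure Ω) {ω | W ω = 1} = 1 / 2)
    (hindep : IndepFun W (fun ω => (A₁ ω, A₂ ω, B₁ ω, B₂ ω)) ℙ)
    (hA₁L2 : MemLp A₁ 2 ℙ) (hA₂L2 : MemLp A₂ 2 ℙ)
    (hB₁L2 : MemLp B₁ 2 ℙ) (hB₂L2 : MemLp B₂ 2 ℙ)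
    (c : ℝ)
    (hc₁ : ∀ᵐ ω ∂ℙ, A₁ ω = B₁ ω + c)
    (hc₂ : ∀ᵐ ω ∂ℙ, A₂ ω = B₂ ω + c)
    (Y1 Y0 : Ω → ℝ)
    (hY1 : ∀ ω, Y1 ω = W ω * A₁ ω + (1 - W ω) * A₂ ω)
    (hY0 : ∀ ω, Y0 ω = (1 - W ω) * B₁ ω + W ω * B₂ ω) :
    (∫ ω, Y1 ω * Y0 ω) - (∫ ω, Y1 ω) * (∫ ω, Y0 ω)
      = ((∫ ω, B₁ ω * B₂ ω) - (∫ ω, B₁ ω) * (∫ ω, B₂ ω))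
        - (1 / 4) * ((∫ ω, B₁ ω) - (∫ ω, B₂ ω)) ^ 2 := by
  -- independence of W with B₁ and B₂
  have hIB₁ : IndepFun W B₁ ℙ :=
    hindep.comp measurable_id (measurable_fst.comp (measurable_snd.comp measurable_snd))
  have hIB₂ : IndepFun W B₂ ℙ :=
    hindep.comp measurable_id (measurable_snd.comp (measurable_snd.comp measurable_snd))
  have hIB₁' : IndepFun (fun ω => 1 - W ω) B₁ ℙ :=
    hIB₁.comp (measurable_const.sub measurable_id) measurable_id
  have hIB₂' : IndepFun (fun ω => 1 - W ω) B₂ ℙ :=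
    hIB₂.comp (measurable_const.sub measurable_id) measurable_id
  -- W integrable and its mean
  have hWmeasSet : MeasurableSet {ω | W ω = 1} := hW (measurableSet_singleton 1)
  have hWae : W =ᵐ[ℙ] Set.indicator {ω | W ω = 1} (fun _ => (1 : ℝ)) := by
    filter_upwards [hW01] with ω hω
    rcases hω with h | h <;> simp [Set.indicator_apply, h]
  have hWint : Integrable W ℙ :=
    ((integrable_const (1 : ℝ)).indicator hWmeasSet).congr hWae.symm
  have hEW : (∫ ω, W ω) = 1 / 2 := by
    rw [integral_congr_ae hWae, integral_indicator_const _ hWmeasSet, measureReal_def, hWhalf]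
    simp [ENNReal.toReal_div]
  have hW'int : Integrable (fun ω => 1 - W ω) ℙ := (integrable_const (1 : ℝ)).sub hWint
  have hEW' : (∫ ω, (1 - W ω)) = 1 / 2 := by
    rw [integral_sub (integrable_const 1) hWint, hEW, integral_const]
    norm_num
  have hB₁int : Integrable B₁ ℙ := hB₁L2.integrable one_le_two
  have hB₂int : Integrable B₂ ℙ := hB₂L2.integrable one_le_two
  -- product means
  have hWB₁ : (∫ ω, W ω * B₁ ω) = (1 / 2) * ∫ ω, B₁ ω := by
    have := hIB₁.integral_mul_eq_mul_integral hW.aestronglyMeasurable hB₁.aestronglyMeasurable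
    simpa [Pi.mul_apply, hEW] using this
  have hWB₂ : (∫ ω, W ω * B₂ ω) = (1 / 2) * ∫ ω, B₂ ω := by
    have := hIB₂.integral_mul_eq_mul_integral hW.aestronglyMeasurable hB₂.aestronglyMeasurable
    simpa [Pi.mul_apply, hEW] using this
  have hW'B₁ : (∫ ω, (1 - W ω) * B₁ ω) = (1 / 2) * ∫ ω, B₁ ω := by
    have := hIB₁'.integral_mul_eq_mul_integral (aestronglyMeasurable_const.sub hW.aestronglyMeasurable)
      hB₁.aestronglyMeasurable
    simpa [Pi.mul_apply, hEW'] using this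
  have hW'B₂ : (∫ ω, (1 - W ω) * B₂ ω) = (1 / 2) * ∫ ω, B₂ ω := by
    have := hIB₂'.integral_mul_eq_mul_integral (aestronglyMeasurable_const.sub hW.aestronglyMeasurable)
      hB₂.aestronglyMeasurable
    simpa [Pi.mul_apply, hEW'] using this
  -- integrability of products
  have hWB₁int : Integrable (fun ω => W ω * B₁ ω) ℙ := hIB₁.integrable_mul hWint hB₁int
  have hWB₂int : Integrable (fun ω => W ω * B₂ ω) ℙ := hIB₂.integrable_mul hWint hB₂int
  have hW'B₁int : Integrable (fun ω => (1 - W ω) * B₁ ω) ℙ :=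
    hIB₁'.integrable_mul hW'int hB₁int
  have hW'B₂int : Integrable (fun ω => (1 - W ω) * B₂ ω) ℙ :=
    hIB₂'.integrable_mul hW'int hB₂int
  -- mean of Y0
  have hEY0 : (∫ ω, Y0 ω) = (1 / 2) * (∫ ω, B₁ ω) + (1 / 2) * (∫ ω, B₂ ω) := by
    have : (∫ ω, Y0 ω) = ∫ ω, ((1 - W ω) * B₁ ω + W ω * B₂ ω) := by
      exact integral_congr_ae (Filter.Eventually.of_forall fun ω => hY0 ω)
    rw [this, integral_add hW'B₁int hWB₂int, hW'B₁, hWB₂]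
  have hY0int : Integrable Y0 ℙ := by
    have : Y0 = fun ω => (1 - W ω) * B₁ ω + W ω * B₂ ω := funext hY0
    rw [this]; exact hW'B₁int.add hWB₂int
  -- mean of Y1
  have hEY1 : (∫ ω, Y1 ω) = (1 / 2) * (∫ ω, B₁ ω) + (1 / 2) * (∫ ω, B₂ ω) + c := by
    have hae : Y1 =ᵐ[ℙ] fun ω => W ω * B₁ ω + (1 - W ω) * B₂ ω + c := by
      filter_upwards [hc₁, hc₂] with ω h1 h2
      rw [hY1, h1, h2]; ring
    have h12 : Integrable (fun ω => W ω * B₁ ω + (1 - W ω) * B₂ ω) ℙ :=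
      hWB₁int.add hW'B₂int
    calc (∫ ω, Y1 ω) = ∫ ω, (W ω * B₁ ω + (1 - W ω) * B₂ ω + c) := integral_congr_ae hae
      _ = (∫ ω, (W ω * B₁ ω + (1 - W ω) * B₂ ω)) + ∫ _ω, c :=
        integral_add h12 (integrable_const c)
      _ = ((∫ ω, W ω * B₁ ω) + ∫ ω, (1 - W ω) * B₂ ω) + ∫ _ω, c := by
        rw [integral_add hWB₁int hW'B₂int]
      _ = (1 / 2) * (∫ ω, B₁ ω) + (1 / 2) * (∫ ω, B₂ ω) + c := by
        rw [hWB₁, hW'B₂, integral_const]; norm_num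
  -- integrability of B₁ * B₂
  have hBBint : Integrable (fun ω => B₁ ω * B₂ ω) ℙ := by
    have h := hB₂L2.smul (φ := B₁) hB₁L2
      (r := 1) (hpqr := ⟨by rw [inv_one]; exact ENNReal.inv_two_add_inv_two⟩)
    have : MemLp (fun ω => B₁ ω * B₂ ω) 1 ℙ := by
      exact h
    exact this.integrable le_rfl
  -- product Y1 * Y0
  have hprod : (∫ ω, Y1 ω * Y0 ω) = (∫ ω, B₁ ω * B₂ ω) + c * ∫ ω, Y0 ω := by
    have hae : (fun ω => Y1 ω * Y0 ω) =ᵐ[ℙ] fun ω => B₁ ω * B₂ ω + c * Y0 ω := by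
      filter_upwards [hW01, hc₁, hc₂] with ω hw h1 h2
      rw [hY1, hY0, h1, h2]
      rcases hw with h | h <;> rw [h] <;> ring
    rw [integral_congr_ae hae, integral_add hBBint (hY0int.const_mul c),
      integral_const_mul]
  rw [hprod, hEY0, hEY1]
  ring
end

section
/- For every P ≥ 2, with Ȳ(d) = (1/P)Σ_{p≤P} Ŷ_p(d) for d = 0,1 and D_P = (2/P²)Σ_{p≤P} Ŷ_p(1)Ŷ_p(0) − (2/P)Ȳ(1)Ȳ(0) (which equals V̂_unit(τ̂) − V̂_pair(τ̂) in a balanced paired experiment), one has (P/(P−1))·E[D_P] = (2/P²)Σ_{p≤P} Cov(B_{1p}, B_{2p}) − (1/(2P²))Σ_{p≤P}(E[B_{1p} − B_{2p}])² + (2/(P(P−1)))Σ_{p≤P}(E[B̄_p] − (1/P)Σ_{p'≤P} E[B̄_{p'}])². -/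
open Finset MeasureTheory ProbabilityTheory

private lemma final_algebra (τ : ℝ) (P : ℕ) (hn : (P:ℝ) ≠ 0) (hn1 : (P:ℝ) - 1 ≠ 0)
    (x y z : ℕ → ℝ) :
    ((P : ℝ) / ((P : ℝ) - 1)) *
      ((2 / (P : ℝ) ^ 2) * (∑ p ∈ range P, (z p + τ * ((x p + y p) / 2)))
        - (2 / (P : ℝ) ^ 3) * (∑ p ∈ range P,
            (((x p + y p) / 2 + τ) * (∑ q ∈ range P, ((x q + y q) / 2))
              + (z p + τ * ((x p + y p) / 2)
                - ((x p + y p) / 2 + τ) * ((x p + y p) / 2)))))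
      = (2 / (P : ℝ) ^ 2) * ∑ p ∈ range P, (z p - x p * y p)
        - (1 / (2 * (P : ℝ) ^ 2)) * ∑ p ∈ range P, (x p - y p) ^ 2
        + (2 / ((P : ℝ) * ((P : ℝ) - 1))) * ∑ p ∈ range P,
            ((x p + y p) / 2 - (∑ p' ∈ range P, ((x p' + y p') / 2)) / (P : ℝ)) ^ 2 := by
  have hA : ∑ p ∈ range P, (z p + τ * ((x p + y p) / 2))
      = (∑ p ∈ range P, z p) + τ * ∑ p ∈ range P, ((x p + y p) / 2) := by
    rw [Finset.sum_add_distrib, ← Finset.mul_sum]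
  have hB1 : ∀ p ∈ range P,
      (((x p + y p) / 2 + τ) * (∑ q ∈ range P, ((x q + y q) / 2))
        + (z p + τ * ((x p + y p) / 2) - ((x p + y p) / 2 + τ) * ((x p + y p) / 2)))
      = ((x p + y p) / 2) * (∑ q ∈ range P, ((x q + y q) / 2))
        + τ * (∑ q ∈ range P, ((x q + y q) / 2))
        + (z p - ((x p + y p) / 2) ^ 2) := fun p _ => by ring
  have hB : ∑ p ∈ range P,
      (((x p + y p) / 2 + τ) * (∑ q ∈ range P, ((x q + y q) / 2))
        + (z p + τ * ((x p + y p) / 2) - ((x p + y p) / 2 + τ) * ((x p + y p) / 2)))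
      = (∑ p ∈ range P, ((x p + y p) / 2)) * (∑ q ∈ range P, ((x q + y q) / 2))
        + (P : ℝ) * (τ * (∑ q ∈ range P, ((x q + y q) / 2)))
        + ((∑ p ∈ range P, z p) - ∑ p ∈ range P, ((x p + y p) / 2) ^ 2) := by
    rw [Finset.sum_congr rfl hB1, Finset.sum_add_distrib, Finset.sum_add_distrib,
      ← Finset.sum_mul, Finset.sum_const, Finset.card_range, nsmul_eq_mul,
      Finset.sum_sub_distrib]
  have hC1 : ∀ p ∈ range P, z p - x p * y p
      = (z p - ((x p + y p) / 2) ^ 2) + ((x p - y p) ^ 2) / 4 := fun p _ => by ring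
  have hC : ∑ p ∈ range P, (z p - x p * y p)
      = ((∑ p ∈ range P, z p) - ∑ p ∈ range P, ((x p + y p) / 2) ^ 2)
        + (∑ p ∈ range P, (x p - y p) ^ 2) / 4 := by
    rw [Finset.sum_congr rfl hC1, Finset.sum_add_distrib, Finset.sum_sub_distrib,
      ← Finset.sum_div]
  have hD1 : ∀ p ∈ range P,
      ((x p + y p) / 2 - (∑ p' ∈ range P, ((x p' + y p') / 2)) / (P : ℝ)) ^ 2
      = (((x p + y p) / 2) ^ 2
          - (2 * ((∑ p' ∈ range P, ((x p' + y p') / 2)) / (P : ℝ))) * ((x p + y p) / 2))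
        + ((∑ p' ∈ range P, ((x p' + y p') / 2)) / (P : ℝ)) ^ 2 := fun p _ => by ring
  have hD : ∑ p ∈ range P,
      ((x p + y p) / 2 - (∑ p' ∈ range P, ((x p' + y p') / 2)) / (P : ℝ)) ^ 2
      = ((∑ p ∈ range P, ((x p + y p) / 2) ^ 2)
          - (2 * ((∑ p' ∈ range P, ((x p' + y p') / 2)) / (P : ℝ)))
              * (∑ p ∈ range P, ((x p + y p) / 2)))
        + (P : ℝ) * ((∑ p' ∈ range P, ((x p' + y p') / 2)) / (P : ℝ)) ^ 2 := by
    rw [Finset.sum_congr rfl hD1, Finset.sum_add_distrib, Finset.sum_sub_distrib,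
      ← Finset.mul_sum, Finset.sum_const, Finset.card_range, nsmul_eq_mul]
  rw [hA, hB, hC, hD]
  field_simp
  ring


private lemma memL2_mul_int {Ω : Type*} [MeasureSpace Ω] [IsProbabilityMeasure (ℙ : Measure Ω)]
    {f g : Ω → ℝ} (hf : MemLp f 2 ℙ) (hg : MemLp g 2 ℙ) :
    Integrable (fun ω => f ω * g ω) ℙ := by
  have h2 : Integrable (fun ω => (f ω ^ 2 + g ω ^ 2) / 2) ℙ :=
    (hf.integrable_sq.add hg.integrable_sq).div_const 2
  refine h2.mono' (hf.aestronglyMeasurable.mul hg.aestronglyMeasurable) ?_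
  filter_upwards with ω
  rw [Real.norm_eq_abs, abs_mul]
  nlinarith [sq_nonneg (|f ω| - |g ω|), abs_nonneg (f ω), abs_nonneg (g ω),
    sq_abs (f ω), sq_abs (g ω)]

/-- In a paired experiment with independent pairs, Bernoulli(1/2) treatment within each pair
independent of potential outcomes, and constant treatment effects, the expectation of
`D_P = (2/P²) Σ_{p<P} Ŷ_p(1)Ŷ_p(0) − (2/P) Ȳ(1)Ȳ(0)` satisfies
`(P/(P−1)) E[D_P] = (2/P²) Σ_p Cov(B_{1p}, B_{2p}) − (1/(2P²)) Σ_p (E[B_{1p} − B_{2p}])²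
  + (2/(P(P−1))) Σ_p (E[B̄_p] − (1/P) Σ_{p'} E[B̄_{p'}])²`. -/
theorem expectation_diff_unit_pair_clustered_variance
    {Ω : Type*} [MeasureSpace Ω] [IsProbabilityMeasure (ℙ : Measure Ω)]
    (A₁ A₂ B₁ B₂ W : ℕ → Ω → ℝ)
    (hA₁ : ∀ p, Measurable (A₁ p)) (hA₂ : ∀ p, Measurable (A₂ p))
    (hB₁ : ∀ p, Measurable (B₁ p)) (hB₂ : ∀ p, Measurable (B₂ p))
    (hW : ∀ p, Measurable (W p))
    (hA₁L2 : ∀ p, MemLp (A₁ p) 2 ℙ) (hA₂L2 : ∀ p, MemLp (A₂ p) 2 ℙ)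
    (hB₁L2 : ∀ p, MemLp (B₁ p) 2 ℙ) (hB₂L2 : ∀ p, MemLp (B₂ p) 2 ℙ)
    (hW01 : ∀ p, ∀ᵐ ω ∂ℙ, W p ω = 0 ∨ W p ω = 1)
    (hWhalf : ∀ p, (ℙ : Measure Ω) {ω | W p ω = 1} = 1 / 2)
    (hindep_across : iIndepFun
        (fun p ω => (W p ω, A₁ p ω, A₂ p ω, B₁ p ω, B₂ p ω)) ℙ)
    (hindep_within : ∀ p,
        IndepFun (W p) (fun ω => (A₁ p ω, A₂ p ω, B₁ p ω, B₂ p ω)) ℙ)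
    (τ : ℝ)
    (hcte₁ : ∀ p, ∀ᵐ ω ∂ℙ, A₁ p ω = B₁ p ω + τ)
    (hcte₂ : ∀ p, ∀ᵐ ω ∂ℙ, A₂ p ω = B₂ p ω + τ)
    (Yh1 Yh0 : ℕ → Ω → ℝ)
    (hYh1 : ∀ p ω, Yh1 p ω = W p ω * A₁ p ω + (1 - W p ω) * A₂ p ω)
    (hYh0 : ∀ p ω, Yh0 p ω = (1 - W p ω) * B₁ p ω + W p ω * B₂ p ω)
    (Bbar : ℕ → Ω → ℝ)
    (hBbar : ∀ p ω, Bbar p ω = (B₁ p ω + B₂ p ω) / 2)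
    (P : ℕ) (hP : 2 ≤ P)
    (D : Ω → ℝ)
    (hD : ∀ ω, D ω = (2 / (P : ℝ) ^ 2) * ∑ p ∈ range P, Yh1 p ω * Yh0 p ω
        - (2 / (P : ℝ)) * (((∑ p ∈ range P, Yh1 p ω) / P) * ((∑ p ∈ range P, Yh0 p ω) / P))) :
    ((P : ℝ) / ((P : ℝ) - 1)) * ∫ ω, D ω
      = (2 / (P : ℝ) ^ 2) * ∑ p ∈ range P,
          ((∫ ω, B₁ p ω * B₂ p ω) - (∫ ω, B₁ p ω) * (∫ ω, B₂ p ω))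
        - (1 / (2 * (P : ℝ) ^ 2)) * ∑ p ∈ range P, (∫ ω, (B₁ p ω - B₂ p ω)) ^ 2
        + (2 / ((P : ℝ) * ((P : ℝ) - 1))) * ∑ p ∈ range P,
            ((∫ ω, Bbar p ω) - (∑ p' ∈ range P, ∫ ω, Bbar p' ω) / P) ^ 2 := by
  -- basic facts about P
  have hn2 : (2 : ℝ) ≤ (P : ℝ) := by exact_mod_cast hP
  have hn : (P : ℝ) ≠ 0 := by linarith
  have hn1 : (P : ℝ) - 1 ≠ 0 := by linarith
  -- basic integrabilities
  have hA₁int : ∀ p, Integrable (A₁ p) ℙ := fun p => (hA₁L2 p).integrable one_le_two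
  have hA₂int : ∀ p, Integrable (A₂ p) ℙ := fun p => (hA₂L2 p).integrable one_le_two
  have hB₁int : ∀ p, Integrable (B₁ p) ℙ := fun p => (hB₁L2 p).integrable one_le_two
  have hB₂int : ∀ p, Integrable (B₂ p) ℙ := fun p => (hB₂L2 p).integrable one_le_two
  -- integral of W
  have hIW : ∀ p, ∫ ω, W p ω = 1 / 2 := by
    intro p
    have hmeas : MeasurableSet {ω | W p ω = 1} := hW p (measurableSet_singleton 1)
    have hae : W p =ᵐ[ℙ] Set.indicator {ω | W p ω = 1} (1 : Ω → ℝ) := by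
      filter_upwards [hW01 p] with ω h
      rcases h with h | h <;> simp [Set.indicator_apply, h]
    rw [integral_congr_ae hae, integral_indicator_one hmeas, measureReal_def, hWhalf p]
    simp [ENNReal.toReal_div]
  -- W times an L¹ function of the potential outcomes is integrable
  have hWmulInt : ∀ p (V : Ω → ℝ), Measurable V → Integrable V ℙ →
      Integrable (fun ω => W p ω * V ω) ℙ := by
    intro p V hVm hVi
    refine hVi.abs.mono' ((hW p).mul hVm).aestronglyMeasurable ?_
    filter_upwards [hW01 p] with ω h
    rcases h with h | h <;> rw [h] <;> simp [Real.norm_eq_abs, abs_abs]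
  -- expectation of W times an independent function of the potential outcomes
  have hWmul : ∀ p (V : Ω → ℝ) (φ : ℝ × ℝ × ℝ × ℝ → ℝ), Measurable φ →
      (V = fun ω => φ (A₁ p ω, A₂ p ω, B₁ p ω, B₂ p ω)) →
      ∫ ω, W p ω * V ω = (1 / 2) * ∫ ω, V ω := by
    intro p V φ hφ hVeq
    have hquad : Measurable (fun ω => (A₁ p ω, A₂ p ω, B₁ p ω, B₂ p ω)) :=
      (hA₁ p).prodMk ((hA₂ p).prodMk ((hB₁ p).prodMk (hB₂ p)))
    have hVm : Measurable V := by rw [hVeq]; exact hφ.comp hquad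
    have hi : IndepFun (W p) V ℙ := by
      rw [hVeq]; exact (hindep_within p).comp measurable_id hφ
    rw [hi.integral_fun_mul_eq_mul_integral (hW p).aestronglyMeasurable hVm.aestronglyMeasurable, hIW p]
  -- integrals of the treated potential outcomes
  have hIA₁ : ∀ p, ∫ ω, A₁ p ω = (∫ ω, B₁ p ω) + τ := by
    intro p
    rw [integral_congr_ae ((hcte₁ p) : A₁ p =ᵐ[ℙ] fun ω => B₁ p ω + τ),
      integral_add (hB₁int p) (integrable_const τ)]
    simp
  have hIA₂ : ∀ p, ∫ ω, A₂ p ω = (∫ ω, B₂ p ω) + τ := by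
    intro p
    rw [integral_congr_ae ((hcte₂ p) : A₂ p =ᵐ[ℙ] fun ω => B₂ p ω + τ),
      integral_add (hB₂int p) (integrable_const τ)]
    simp
  -- measurability and L² bounds for the observed outcomes
  have hY1meas : ∀ p, Measurable (Yh1 p) := by
    intro p
    have : Yh1 p = fun ω => W p ω * A₁ p ω + (1 - W p ω) * A₂ p ω := funext (hYh1 p)
    rw [this]
    exact ((hW p).mul (hA₁ p)).add ((measurable_const.sub (hW p)).mul (hA₂ p))
  have hY0meas : ∀ p, Measurable (Yh0 p) := by
    intro p
    have : Yh0 p = fun ω => (1 - W p ω) * B₁ p ω + W p ω * B₂ p ω := funext (hYh0 p)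
    rw [this]
    exact ((measurable_const.sub (hW p)).mul (hB₁ p)).add ((hW p).mul (hB₂ p))
  have hY1L2 : ∀ p, MemLp (Yh1 p) 2 ℙ := by
    intro p
    refine MemLp.of_le ((hA₁L2 p).norm.add (hA₂L2 p).norm)
      (hY1meas p).aestronglyMeasurable ?_
    filter_upwards [hW01 p] with ω h
    have hnn : (0:ℝ) ≤ |A₁ p ω| + |A₂ p ω| := by positivity
    simp only [hYh1, Pi.add_apply, Real.norm_eq_abs]
    rw [abs_of_nonneg hnn]
    rcases h with h | h <;> rw [h]
    · simpa using le_add_of_nonneg_left (abs_nonneg (A₁ p ω))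
    · simpa using le_add_of_nonneg_right (abs_nonneg (A₂ p ω))
  have hY0L2 : ∀ p, MemLp (Yh0 p) 2 ℙ := by
    intro p
    refine MemLp.of_le ((hB₁L2 p).norm.add (hB₂L2 p).norm)
      (hY0meas p).aestronglyMeasurable ?_
    filter_upwards [hW01 p] with ω h
    have hnn : (0:ℝ) ≤ |B₁ p ω| + |B₂ p ω| := by positivity
    simp only [hYh0, Pi.add_apply, Real.norm_eq_abs]
    rw [abs_of_nonneg hnn]
    rcases h with h | h <;> rw [h]
    · simpa using le_add_of_nonneg_right (abs_nonneg (B₂ p ω))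
    · simpa using le_add_of_nonneg_left (abs_nonneg (B₁ p ω))
  have hprodInt : ∀ p q, Integrable (fun ω => Yh1 p ω * Yh0 q ω) ℙ := fun p q =>
    memL2_mul_int (hY1L2 p) (hY0L2 q)
  -- expectations of the observed outcomes
  have h1 : ∀ p, ∫ ω, Yh1 p ω = ((∫ ω, B₁ p ω) + ∫ ω, B₂ p ω) / 2 + τ := by
    intro p
    have hWA₁ : ∫ ω, W p ω * A₁ p ω = (1 / 2) * ∫ ω, A₁ p ω :=
      hWmul p (A₁ p) (fun x => x.1) (by fun_prop) rfl
    have hWA₂ : ∫ ω, W p ω * A₂ p ω = (1 / 2) * ∫ ω, A₂ p ω :=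
      hWmul p (A₂ p) (fun x => x.2.1) (by fun_prop) rfl
    have hWA₁int : Integrable (fun ω => W p ω * A₁ p ω) ℙ :=
      hWmulInt p (A₁ p) (hA₁ p) (hA₁int p)
    have hWA₂int : Integrable (fun ω => W p ω * A₂ p ω) ℙ :=
      hWmulInt p (A₂ p) (hA₂ p) (hA₂int p)
    have : ∫ ω, Yh1 p ω
        = (∫ ω, W p ω * A₁ p ω) + ((∫ ω, A₂ p ω) - ∫ ω, W p ω * A₂ p ω) := by
      simp only [hYh1, sub_mul, one_mul]
      have hsub : Integrable (fun ω => A₂ p ω - W p ω * A₂ p ω) ℙ := (hA₂int p).sub hWA₂int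
      rw [integral_add hWA₁int hsub, integral_sub (hA₂int p) hWA₂int]
    rw [this, hWA₁, hWA₂, hIA₁ p, hIA₂ p]
    ring
  have h0 : ∀ p, ∫ ω, Yh0 p ω = ((∫ ω, B₁ p ω) + ∫ ω, B₂ p ω) / 2 := by
    intro p
    have hWB₁ : ∫ ω, W p ω * B₁ p ω = (1 / 2) * ∫ ω, B₁ p ω :=
      hWmul p (B₁ p) (fun x => x.2.2.1) (by fun_prop) rfl
    have hWB₂ : ∫ ω, W p ω * B₂ p ω = (1 / 2) * ∫ ω, B₂ p ω :=
      hWmul p (B₂ p) (fun x => x.2.2.2) (by fun_prop) rfl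
    have hWB₁int : Integrable (fun ω => W p ω * B₁ p ω) ℙ :=
      hWmulInt p (B₁ p) (hB₁ p) (hB₁int p)
    have hWB₂int : Integrable (fun ω => W p ω * B₂ p ω) ℙ :=
      hWmulInt p (B₂ p) (hB₂ p) (hB₂int p)
    have : ∫ ω, Yh0 p ω
        = ((∫ ω, B₁ p ω) - ∫ ω, W p ω * B₁ p ω) + ∫ ω, W p ω * B₂ p ω := by
      simp only [hYh0, sub_mul, one_mul]
      have hsub : Integrable (fun ω => B₁ p ω - W p ω * B₁ p ω) ℙ := (hB₁int p).sub hWB₁int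
      rw [integral_add hsub hWB₂int, integral_sub (hB₁int p) hWB₁int]
    rw [this, hWB₁, hWB₂]
    ring
  -- diagonal products
  have hdiag : ∀ p, ∫ ω, Yh1 p ω * Yh0 p ω
      = (∫ ω, B₁ p ω * B₂ p ω) + τ * (((∫ ω, B₁ p ω) + ∫ ω, B₂ p ω) / 2) := by
    intro p
    have hA₁B₂int : Integrable (fun ω => A₁ p ω * B₂ p ω) ℙ :=
      memL2_mul_int (hA₁L2 p) (hB₂L2 p)
    have hA₂B₁int : Integrable (fun ω => A₂ p ω * B₁ p ω) ℙ :=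
      memL2_mul_int (hA₂L2 p) (hB₁L2 p)
    have hWA₁B₂int : Integrable (fun ω => W p ω * (A₁ p ω * B₂ p ω)) ℙ :=
      hWmulInt p _ ((hA₁ p).mul (hB₂ p)) hA₁B₂int
    have hWA₂B₁int : Integrable (fun ω => W p ω * (A₂ p ω * B₁ p ω)) ℙ :=
      hWmulInt p _ ((hA₂ p).mul (hB₁ p)) hA₂B₁int
    have hae : (fun ω => Yh1 p ω * Yh0 p ω)
        =ᵐ[ℙ] fun ω => W p ω * (A₁ p ω * B₂ p ω)
          + (A₂ p ω * B₁ p ω - W p ω * (A₂ p ω * B₁ p ω)) := by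
      filter_upwards [hW01 p] with ω h
      simp only [hYh1, hYh0]
      rcases h with h | h <;> rw [h] <;> ring
    have hWA₁B₂ : ∫ ω, W p ω * (A₁ p ω * B₂ p ω)
        = (1 / 2) * ∫ ω, A₁ p ω * B₂ p ω :=
      hWmul p _ (fun x => x.1 * x.2.2.2) (by fun_prop) rfl
    have hWA₂B₁ : ∫ ω, W p ω * (A₂ p ω * B₁ p ω)
        = (1 / 2) * ∫ ω, A₂ p ω * B₁ p ω :=
      hWmul p _ (fun x => x.2.1 * x.2.2.1) (by fun_prop) rfl
    have hIA₁B₂ : ∫ ω, A₁ p ω * B₂ p ω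
        = (∫ ω, B₁ p ω * B₂ p ω) + τ * ∫ ω, B₂ p ω := by
      have hae2 : (fun ω => A₁ p ω * B₂ p ω)
          =ᵐ[ℙ] fun ω => B₁ p ω * B₂ p ω + τ * B₂ p ω := by
        filter_upwards [hcte₁ p] with ω h
        rw [h]; ring
      rw [integral_congr_ae hae2,
        integral_add (memL2_mul_int (hB₁L2 p) (hB₂L2 p)) ((hB₂int p).const_mul τ),
        integral_const_mul]
    have hIA₂B₁ : ∫ ω, A₂ p ω * B₁ p ω
        = (∫ ω, B₁ p ω * B₂ p ω) + τ * ∫ ω, B₁ p ω := by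
      have hae2 : (fun ω => A₂ p ω * B₁ p ω)
          =ᵐ[ℙ] fun ω => B₁ p ω * B₂ p ω + τ * B₁ p ω := by
        filter_upwards [hcte₂ p] with ω h
        rw [h]; ring
      rw [integral_congr_ae hae2,
        integral_add (memL2_mul_int (hB₁L2 p) (hB₂L2 p)) ((hB₁int p).const_mul τ),
        integral_const_mul]
    have hsub : Integrable (fun ω => A₂ p ω * B₁ p ω - W p ω * (A₂ p ω * B₁ p ω)) ℙ :=
      hA₂B₁int.sub hWA₂B₁int
    rw [integral_congr_ae hae,
      integral_add hWA₁B₂int hsub,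
      integral_sub hA₂B₁int hWA₂B₁int, hWA₁B₂, hWA₂B₁, hIA₁B₂, hIA₂B₁]
    ring
  -- cross products
  have hcross : ∀ p q, p ≠ q →
      ∫ ω, Yh1 p ω * Yh0 q ω = (∫ ω, Yh1 p ω) * ∫ ω, Yh0 q ω := by
    intro p q hpq
    have hiF := hindep_across.indepFun hpq
    have hφ1 : Measurable (fun x : ℝ × ℝ × ℝ × ℝ × ℝ =>
        x.1 * x.2.1 + (1 - x.1) * x.2.2.1) := by fun_prop
    have hφ0 : Measurable (fun x : ℝ × ℝ × ℝ × ℝ × ℝ =>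
        (1 - x.1) * x.2.2.2.1 + x.1 * x.2.2.2.2) := by fun_prop
    have h2 : IndepFun (Yh1 p) (Yh0 q) ℙ := by
      have h3 := hiF.comp hφ1 hφ0
      have e1 : ((fun x : ℝ × ℝ × ℝ × ℝ × ℝ => x.1 * x.2.1 + (1 - x.1) * x.2.2.1) ∘
          fun ω => (W p ω, A₁ p ω, A₂ p ω, B₁ p ω, B₂ p ω)) = Yh1 p := by
        funext ω; simp [hYh1, Function.comp]
      have e0 : ((fun x : ℝ × ℝ × ℝ × ℝ × ℝ => (1 - x.1) * x.2.2.2.1 + x.1 * x.2.2.2.2) ∘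
          fun ω => (W q ω, A₁ q ω, A₂ q ω, B₁ q ω, B₂ q ω)) = Yh0 q := by
        funext ω; simp [hYh0, Function.comp]
      rwa [e1, e0] at h3
    exact h2.integral_fun_mul_eq_mul_integral (hY1meas p).aestronglyMeasurable (hY0meas q).aestronglyMeasurable
  -- rewrite D
  have hDfun : D = fun ω => (2 / (P : ℝ) ^ 2) * (∑ p ∈ range P, Yh1 p ω * Yh0 p ω)
      - (2 / (P : ℝ) ^ 3) * (∑ p ∈ range P, ∑ q ∈ range P, Yh1 p ω * Yh0 q ω) := by
    funext ω
    rw [hD ω, ← Finset.sum_mul_sum]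
    field_simp
  have hFint : Integrable (fun ω => ∑ p ∈ range P, Yh1 p ω * Yh0 p ω) ℙ :=
    integrable_finset_sum _ fun p _ => hprodInt p p
  have hGint : Integrable (fun ω => ∑ p ∈ range P, ∑ q ∈ range P, Yh1 p ω * Yh0 q ω) ℙ :=
    integrable_finset_sum _ fun p _ => integrable_finset_sum _ fun q _ => hprodInt p q
  -- compute the expectation of D
  have hID : ∫ ω, D ω
      = (2 / (P : ℝ) ^ 2) * (∑ p ∈ range P,
            ((∫ ω, B₁ p ω * B₂ p ω) + τ * (((∫ ω, B₁ p ω) + ∫ ω, B₂ p ω) / 2)))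
        - (2 / (P : ℝ) ^ 3) * (∑ p ∈ range P,
            (((((∫ ω, B₁ p ω) + ∫ ω, B₂ p ω) / 2) + τ)
                * (∑ q ∈ range P, (((∫ ω, B₁ q ω) + ∫ ω, B₂ q ω) / 2))
              + ((∫ ω, B₁ p ω * B₂ p ω) + τ * (((∫ ω, B₁ p ω) + ∫ ω, B₂ p ω) / 2)
                - ((((∫ ω, B₁ p ω) + ∫ ω, B₂ p ω) / 2) + τ)
                    * (((∫ ω, B₁ p ω) + ∫ ω, B₂ p ω) / 2)))) := by
    rw [hDfun]
    rw [integral_sub (hFint.const_mul _) (hGint.const_mul _), integral_const_mul,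
      integral_const_mul,
      integral_finset_sum _ (fun p _ => hprodInt p p),
      integral_finset_sum _ (fun p _ => integrable_finset_sum _ fun q _ => hprodInt p q)]
    congr 1
    · congr 1
      exact Finset.sum_congr rfl fun p _ => hdiag p
    congr 1
    refine Finset.sum_congr rfl fun p hp => ?_
    rw [integral_finset_sum _ (fun q _ => hprodInt p q)]
    have key : ∑ q ∈ range P,
        ((∫ ω, Yh1 p ω * Yh0 q ω)
          - ((((∫ ω, B₁ p ω) + ∫ ω, B₂ p ω) / 2) + τ)
              * (((∫ ω, B₁ q ω) + ∫ ω, B₂ q ω) / 2))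
        = (∫ ω, B₁ p ω * B₂ p ω) + τ * (((∫ ω, B₁ p ω) + ∫ ω, B₂ p ω) / 2)
          - ((((∫ ω, B₁ p ω) + ∫ ω, B₂ p ω) / 2) + τ)
              * (((∫ ω, B₁ p ω) + ∫ ω, B₂ p ω) / 2) := by
      rw [Finset.sum_eq_single_of_mem p hp]
      · rw [hdiag p]
      · intro q hq hqp
        rw [hcross p q (Ne.symm hqp), h1 p, h0 q]
        ring
    have expand : ∑ q ∈ range P,
        ((∫ ω, Yh1 p ω * Yh0 q ω)
          - ((((∫ ω, B₁ p ω) + ∫ ω, B₂ p ω) / 2) + τ)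
              * (((∫ ω, B₁ q ω) + ∫ ω, B₂ q ω) / 2))
        = (∑ q ∈ range P, ∫ ω, Yh1 p ω * Yh0 q ω)
          - ((((∫ ω, B₁ p ω) + ∫ ω, B₂ p ω) / 2) + τ)
              * ∑ q ∈ range P, (((∫ ω, B₁ q ω) + ∫ ω, B₂ q ω) / 2) := by
      rw [Finset.sum_sub_distrib, Finset.mul_sum]
    linarith [key, expand.symm]
  -- integrals appearing on the right-hand side
  have hIBbar : ∀ p, ∫ ω, Bbar p ω = ((∫ ω, B₁ p ω) + ∫ ω, B₂ p ω) / 2 := by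
    intro p
    have : (fun ω => Bbar p ω) = fun ω => (B₁ p ω + B₂ p ω) / 2 := funext (hBbar p)
    rw [this, integral_div, integral_add (hB₁int p) (hB₂int p)]
  have hIdiff : ∀ p, ∫ ω, (B₁ p ω - B₂ p ω) = (∫ ω, B₁ p ω) - ∫ ω, B₂ p ω := by
    intro p
    exact integral_sub (hB₁int p) (hB₂int p)
  -- final algebra
  rw [hID]
  simp only [hIBbar, hIdiff]
  exact final_algebra τ P hn hn1 (fun p => ∫ ω, B₁ p ω) (fun p => ∫ ω, B₂ p ω)
    (fun p => ∫ ω, B₁ p ω * B₂ p ω)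
end

section
/- Without any balance restriction on the n_{gp}, the variance estimators of the fixed-effects estimator satisfy (1/2)·V̂_pair(τ̂_fe) ≤ V̂_unit(τ̂_fe) ≤ V̂_pair(τ̂_fe); more precisely, V̂_unit(τ̂_fe) = Σ_p m_p ζ_p · V̂_pair(τ̂_fe) whenever Σ_p SET_{p,fe}² > 0, where m_p = (n_{1p}/n_p)² + (n_{2p}/n_p)² ∈ [1/2, 1] and ζ_p = SET_{p,fe}²/Σ_{p'} SET_{p',fe}² are nonnegative weights summing to one. -/
open Finset

/-- Without any balance restriction on the `n_{gp}`, the variance estimators of the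
fixed-effects estimator satisfy `(1/2) V̂_pair(τ̂_fe) ≤ V̂_unit(τ̂_fe) ≤ V̂_pair(τ̂_fe)`;
moreover `m_p = (n_{1p}/n_p)² + (n_{2p}/n_p)² ∈ [1/2, 1]`, and whenever `Σ_p SET_{p,fe}² > 0`,
the weights `ζ_p = SET_{p,fe}²/Σ_{p'} SET_{p',fe}²` are nonnegative, sum to one, and
`V̂_unit(τ̂_fe) = (Σ_p m_p ζ_p) · V̂_pair(τ̂_fe)`. -/
theorem unit_vs_pair_clustered_variance_fe_unbalanced
    (P : ℕ) (hP : 1 ≤ P)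
    (n : Fin P → Fin 2 → ℕ) (hn : ∀ p g, 1 ≤ n p g)
    (W : Fin P → Fin 2 → ℝ)
    (hW01 : ∀ p g, W p g = 0 ∨ W p g = 1)
    (hWpair : ∀ p, W p 0 + W p 1 = 1)
    (Y : (p : Fin P) → (g : Fin 2) → Fin (n p g) → ℝ)
    (w : Fin P → ℝ)
    (hw : ∀ p, w p = (1 / (n p 0 : ℝ) + 1 / (n p 1 : ℝ))⁻¹
        / ∑ p' : Fin P, (1 / (n p' 0 : ℝ) + 1 / (n p' 1 : ℝ))⁻¹)
    (τfe : ℝ)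
    (hτfe : τfe = ∑ p : Fin P, w p * ∑ g : Fin 2,
        (2 * W p g - 1) * (∑ i : Fin (n p g), Y p g i) / (n p g : ℝ))
    (Tp np Wbarp Ybarp : Fin P → ℝ)
    (hTp : ∀ p, Tp p = ∑ g : Fin 2, (n p g : ℝ) * W p g)
    (hnp : ∀ p, np p = (n p 0 : ℝ) + (n p 1 : ℝ))
    (hWbarp : ∀ p, Wbarp p = Tp p / np p)
    (hYbarp : ∀ p, Ybarp p = (∑ g : Fin 2, ∑ i : Fin (n p g), Y p g i) / np p)
    (u : (p : Fin P) → (g : Fin 2) → Fin (n p g) → ℝ)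
    (hu : ∀ p g i, u p g i = Y p g i - Ybarp p - τfe * (W p g - Wbarp p))
    (SETfe : Fin P → ℝ)
    (hSETfe : ∀ p, SETfe p = ∑ g : Fin 2, ∑ i : Fin (n p g), W p g * u p g i)
    (Vpairfe Vunitfe : ℝ)
    (hVpairfe : Vpairfe
        = (∑ p : Fin P, (∑ g : Fin 2, ∑ i : Fin (n p g), (W p g - Wbarp p) * u p g i) ^ 2)
        / (∑ p : Fin P, ∑ g : Fin 2, ∑ i : Fin (n p g), (W p g - Wbarp p) ^ 2) ^ 2)
    (hVunitfe : Vunitfe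
        = (∑ p : Fin P, ∑ g : Fin 2, ((W p g - Wbarp p) * ∑ i : Fin (n p g), u p g i) ^ 2)
        / (∑ p : Fin P, ∑ g : Fin 2, ∑ i : Fin (n p g), (W p g - Wbarp p) ^ 2) ^ 2)
    (m ζ : Fin P → ℝ)
    (hm : ∀ p, m p = ((n p 0 : ℝ) / np p) ^ 2 + ((n p 1 : ℝ) / np p) ^ 2)
    (hζ : ∀ p, ζ p = (SETfe p) ^ 2 / ∑ p' : Fin P, (SETfe p') ^ 2) :
    ((1 / 2) * Vpairfe ≤ Vunitfe ∧ Vunitfe ≤ Vpairfe)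
    ∧ (∀ p, 1 / 2 ≤ m p ∧ m p ≤ 1)
    ∧ (0 < ∑ p : Fin P, (SETfe p) ^ 2 →
        (∀ p, 0 ≤ ζ p) ∧ (∑ p : Fin P, ζ p = 1)
        ∧ Vunitfe = (∑ p : Fin P, m p * ζ p) * Vpairfe) := by
  have hnpos : ∀ p g, (0:ℝ) < (n p g : ℝ) := by
    intro p g; exact_mod_cast Nat.lt_of_lt_of_le Nat.zero_lt_one (hn p g)
  have hnppos : ∀ p, 0 < np p := by
    intro p; rw [hnp]; linarith [hnpos p 0, hnpos p 1]
  set S : (p : Fin P) → Fin 2 → ℝ := fun p g => ∑ i : Fin (n p g), u p g i with hS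
  have hSdef : ∀ p g, S p g = ∑ i : Fin (n p g), u p g i := fun p g => rfl
  have hSg : ∀ p g, S p g = (∑ i : Fin (n p g), Y p g i)
      - (n p g : ℝ) * (Ybarp p + τfe * (W p g - Wbarp p)) := by
    intro p g
    have h1 : ∀ i, u p g i = Y p g i - (Ybarp p + τfe * (W p g - Wbarp p)) := by
      intro i; rw [hu]; ring
    rw [hSdef, Finset.sum_congr rfl fun i _ => h1 i, Finset.sum_sub_distrib,
      Finset.sum_const, Finset.card_fin, nsmul_eq_mul]
  have hSsum : ∀ p, S p 0 + S p 1 = 0 := by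
    intro p
    have hne : np p ≠ 0 := (hnppos p).ne'
    have hY := hYbarp p
    have hWb := hWbarp p
    rw [Fin.sum_univ_two] at hY
    rw [hTp, Fin.sum_univ_two] at hWb
    have hYe : Ybarp p * np p = (∑ i : Fin (n p 0), Y p 0 i) + ∑ i : Fin (n p 1), Y p 1 i := by
      rw [hY]; field_simp
    have hWe : Wbarp p * np p = (n p 0 : ℝ) * W p 0 + (n p 1 : ℝ) * W p 1 := by
      rw [hWb]; field_simp
    have hnpe := hnp p
    rw [hSg, hSg]
    linear_combination (-1) * hYe + τfe * hWe + (Ybarp p - τfe * Wbarp p) * hnpe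
  have key : ∀ p, ((W p 0 - Wbarp p) * S p 0 + (W p 1 - Wbarp p) * S p 1) ^ 2 = SETfe p ^ 2
      ∧ ((W p 0 - Wbarp p) * S p 0) ^ 2 + ((W p 1 - Wbarp p) * S p 1) ^ 2
        = m p * SETfe p ^ 2 := by
    intro p
    have hS1 : S p 1 = - S p 0 := by linarith [hSsum p]
    have h0' := hnpos p 0
    have h1' := hnpos p 1
    have hsum_ne : (n p 0 : ℝ) + (n p 1 : ℝ) ≠ 0 := by positivity
    have hSET : SETfe p = W p 0 * S p 0 + W p 1 * S p 1 := by
      rw [hSETfe, Fin.sum_univ_two, ← Finset.mul_sum, ← Finset.mul_sum, hSdef, hSdef]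
    have hWb : Wbarp p = ((n p 0:ℝ) * W p 0 + (n p 1:ℝ) * W p 1) / ((n p 0:ℝ) + (n p 1:ℝ)) := by
      rw [hWbarp, hTp, Fin.sum_univ_two, hnp]
    rcases hW01 p 0 with h0 | h0
    · have h1 : W p 1 = 1 := by linarith [hWpair p]
      constructor
      · rw [hSET, h0, h1, hS1]; ring
      · rw [hSET, hWb, hm, hnp, h0, h1, hS1]; field_simp; ring
    · have h1 : W p 1 = 0 := by linarith [hWpair p]
      constructor
      · rw [hSET, h0, h1, hS1]; ring
      · rw [hSET, hWb, hm, hnp, h0, h1, hS1]; field_simp; ring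
  set D : ℝ := ∑ p : Fin P, ∑ g : Fin 2, ∑ i : Fin (n p g), (W p g - Wbarp p) ^ 2 with hD
  have hnum1 : ∀ p, (∑ g : Fin 2, ∑ i : Fin (n p g), (W p g - Wbarp p) * u p g i)
      = (W p 0 - Wbarp p) * S p 0 + (W p 1 - Wbarp p) * S p 1 := by
    intro p
    rw [Fin.sum_univ_two, ← Finset.mul_sum, ← Finset.mul_sum, hSdef, hSdef]
  have hnum2 : ∀ p, (∑ g : Fin 2, ((W p g - Wbarp p) * ∑ i : Fin (n p g), u p g i) ^ 2)
      = ((W p 0 - Wbarp p) * S p 0) ^ 2 + ((W p 1 - Wbarp p) * S p 1) ^ 2 := by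
    intro p
    rw [Fin.sum_univ_two, hSdef, hSdef]
  have hVp2 : Vpairfe = (∑ p : Fin P, SETfe p ^ 2) * (D ^ 2)⁻¹ := by
    rw [hVpairfe, div_eq_mul_inv]
    congr 1
    refine Finset.sum_congr rfl fun p _ => ?_
    rw [hnum1 p, (key p).1]
  have hVu2 : Vunitfe = (∑ p : Fin P, m p * SETfe p ^ 2) * (D ^ 2)⁻¹ := by
    rw [hVunitfe, div_eq_mul_inv]
    congr 1
    refine Finset.sum_congr rfl fun p _ => ?_
    rw [hnum2 p, (key p).2]
  have hmb : ∀ p, 1/2 ≤ m p ∧ m p ≤ 1 := by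
    intro p
    have h0 := hnpos p 0
    have h1 := hnpos p 1
    have hs := hnppos p
    have hm' : m p * (np p) ^ 2 = (n p 0 : ℝ) ^ 2 + (n p 1 : ℝ) ^ 2 := by
      rw [hm]; field_simp
    have hnpe := hnp p
    constructor
    · nlinarith [sq_nonneg ((n p 0 : ℝ) - (n p 1 : ℝ)), sq_nonneg (np p), mul_pos hs hs]
    · nlinarith [mul_pos h0 h1, mul_pos hs hs]
  have hinv : (0:ℝ) ≤ (D ^ 2)⁻¹ := by positivity
  have h12 : (1/2) * ∑ p : Fin P, SETfe p ^ 2 ≤ ∑ p : Fin P, m p * SETfe p ^ 2 := by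
    rw [Finset.mul_sum]
    exact Finset.sum_le_sum fun p _ => mul_le_mul_of_nonneg_right (hmb p).1 (sq_nonneg _)
  have hm1 : (∑ p : Fin P, m p * SETfe p ^ 2) ≤ ∑ p : Fin P, SETfe p ^ 2 := by
    refine Finset.sum_le_sum fun p _ => ?_
    nlinarith [(hmb p).2, sq_nonneg (SETfe p)]
  refine ⟨⟨?_, ?_⟩, hmb, ?_⟩
  · rw [hVp2, hVu2, ← mul_assoc]
    exact mul_le_mul_of_nonneg_right h12 hinv
  · rw [hVp2, hVu2]
    exact mul_le_mul_of_nonneg_right hm1 hinv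
  · intro hpos
    have hTne : (∑ p' : Fin P, SETfe p' ^ 2) ≠ 0 := hpos.ne'
    refine ⟨fun p => by rw [hζ]; positivity, ?_, ?_⟩
    · simp only [hζ]
      rw [← Finset.sum_div, div_self hTne]
    · have hz : ∑ p : Fin P, m p * ζ p
          = (∑ p : Fin P, m p * SETfe p ^ 2) / (∑ p' : Fin P, SETfe p' ^ 2) := by
        simp only [hζ, ← mul_div_assoc]
        rw [← Finset.sum_div]
      rw [hVu2, hVp2, hz]
      have htriv : ∀ (a t c : ℝ), t ≠ 0 → a * c = a / t * (t * c) := by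
        intro a t c ht; field_simp
      exact htriv _ _ _ hTne
end
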